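/- arXiv:1610.03425 — 7 statements merged into one kernel-verified Lean document; each statement's English description precedes it below -/
import Mathlib

section
/- Let f satisfy Assumption A and let ρ > 0. Then there exist constants 0 < c_f ≤ C_f < ∞, depending only on f and ρ, such that: (i) for every n ∈ ℕ and every p ∈ Δ_{n,ρ}, one has (Σ_{i=1}^n (n p_i − 1)²)^{1/2} ≤ √(ρ C_f); and (ii) the supremum over all n ∈ ℕ and all p ∈ Δ_{n,ρ} of (Σ_{i=1}^n (n p_i − 1)²)^{1/2} is at least √(ρ c_f). -/
open MeasureTheory ProbabilityTheory Filter Set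

noncomputable section

lemma mono_aux {φ φ' : ℝ → ℝ} {a b : ℝ}
    (hder : ∀ t ∈ Icc a b, HasDerivAt φ (φ' t) t)
    (hpos : ∀ t ∈ Icc a b, 0 ≤ φ' t) : MonotoneOn φ (Icc a b) := by
  refine monotoneOn_of_deriv_nonneg (convex_Icc a b)
    (fun t ht => (hder t ht).continuousAt.continuousWithinAt)
    (fun t ht => ((hder t (interior_subset ht)).differentiableAt).differentiableWithinAt)
    (fun t ht => ?_)
  rw [(hder t (interior_subset ht)).deriv]
  exact hpos t (interior_subset ht)

lemma anti_aux {φ φ' : ℝ → ℝ} {a b : ℝ}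
    (hder : ∀ t ∈ Icc a b, HasDerivAt φ (φ' t) t)
    (hneg : ∀ t ∈ Icc a b, φ' t ≤ 0) : AntitoneOn φ (Icc a b) := by
  refine antitoneOn_of_deriv_nonpos (convex_Icc a b)
    (fun t ht => (hder t ht).continuousAt.continuousWithinAt)
    (fun t ht => ((hder t (interior_subset ht)).differentiableAt).differentiableWithinAt)
    (fun t ht => ?_)
  rw [(hder t (interior_subset ht)).deriv]
  exact hneg t (interior_subset ht)

lemma quad_bounds {g : ℝ → ℝ} {δ : ℝ} (hδ : 0 < δ)
    (hd1 : ∀ t ∈ Icc (1-δ) (1+δ), HasDerivAt g (deriv g t) t)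
    (hd2 : ∀ t ∈ Icc (1-δ) (1+δ), HasDerivAt (deriv g) (deriv (deriv g) t) t)
    (hg1 : g 1 = 0) (hg'1 : deriv g 1 = 0)
    (h2lo : ∀ t ∈ Icc (1-δ) (1+δ), 1 ≤ deriv (deriv g) t)
    (h2hi : ∀ t ∈ Icc (1-δ) (1+δ), deriv (deriv g) t ≤ 3) :
    ∀ t ∈ Icc (1-δ) (1+δ), 1/2*(t-1)^2 ≤ g t ∧ g t ≤ 3/2*(t-1)^2 := by
  have h1J : (1:ℝ) ∈ Icc (1-δ) (1+δ) := by constructor <;> linarith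
  -- derivative facts for auxiliary functions
  have hu : ∀ t ∈ Icc (1-δ) (1+δ), HasDerivAt (fun s => deriv g s - s) (deriv (deriv g) t - 1) t :=
    fun t ht => (hd2 t ht).sub (hasDerivAt_id t)
  have hs : ∀ t ∈ Icc (1-δ) (1+δ), HasDerivAt (fun s => deriv g s - 3*s) (deriv (deriv g) t - 3) t := by
    intro t ht
    have := (hd2 t ht).sub ((hasDerivAt_id' t).const_mul 3)
    rwa [mul_one] at this
  have humono : MonotoneOn (fun s => deriv g s - s) (Icc (1-δ) (1+δ)) :=
    mono_aux hu (fun t ht => by linarith [h2lo t ht])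
  have hsanti : AntitoneOn (fun s => deriv g s - 3*s) (Icc (1-δ) (1+δ)) :=
    anti_aux hs (fun t ht => by linarith [h2hi t ht])
  -- bounds on deriv g
  have hDlo : ∀ t ∈ Icc (1-δ) (1+δ), 1 ≤ t → t - 1 ≤ deriv g t ∧ deriv g t ≤ 3*(t-1) := by
    intro t ht h1t
    have h1 := humono h1J ht h1t
    have h2 := hsanti h1J ht h1t
    simp only [hg'1] at h1 h2
    constructor <;> linarith
  have hDhi : ∀ t ∈ Icc (1-δ) (1+δ), t ≤ 1 → deriv g t ≤ t - 1 ∧ 3*(t-1) ≤ deriv g t := by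
    intro t ht h1t
    have h1 := humono ht h1J h1t
    have h2 := hsanti ht h1J h1t
    simp only [hg'1] at h1 h2
    constructor <;> linarith
  -- auxiliary functions v and w
  have hv : ∀ t ∈ Icc (1-δ) (1+δ), HasDerivAt (fun s => g s - 1/2*(s-1)^2) (deriv g t - (t-1)) t := by
    intro t ht
    have h2 : HasDerivAt (fun s : ℝ => 1/2*(s-1)^2) (t-1) t := by
      have := (((hasDerivAt_id t).sub_const 1).pow 2).const_mul (1/2 : ℝ)
      exact this.congr_deriv (by simp only [id]; norm_num; ring)
    exact (hd1 t ht).sub h2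
  have hw : ∀ t ∈ Icc (1-δ) (1+δ), HasDerivAt (fun s => 3/2*(s-1)^2 - g s) (3*(t-1) - deriv g t) t := by
    intro t ht
    have h2 : HasDerivAt (fun s : ℝ => 3/2*(s-1)^2) (3*(t-1)) t := by
      have := (((hasDerivAt_id t).sub_const 1).pow 2).const_mul (3/2 : ℝ)
      exact this.congr_deriv (by simp only [id]; norm_num; ring)
    exact h2.sub (hd1 t ht)
  have hsub1 : Icc (1:ℝ) (1+δ) ⊆ Icc (1-δ) (1+δ) := Icc_subset_Icc (by linarith) le_rfl
  have hsub2 : Icc (1-δ) (1:ℝ) ⊆ Icc (1-δ) (1+δ) := Icc_subset_Icc le_rfl (by linarith)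
  have hvmono : MonotoneOn (fun s => g s - 1/2*(s-1)^2) (Icc 1 (1+δ)) :=
    mono_aux (fun t ht => hv t (hsub1 ht))
      (fun t ht => by linarith [(hDlo t (hsub1 ht) ht.1).1])
  have hvanti : AntitoneOn (fun s => g s - 1/2*(s-1)^2) (Icc (1-δ) 1) :=
    anti_aux (fun t ht => hv t (hsub2 ht))
      (fun t ht => by linarith [(hDhi t (hsub2 ht) ht.2).1])
  have hwmono : MonotoneOn (fun s => 3/2*(s-1)^2 - g s) (Icc 1 (1+δ)) :=
    mono_aux (fun t ht => hw t (hsub1 ht))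
      (fun t ht => by linarith [(hDlo t (hsub1 ht) ht.1).2])
  have hwanti : AntitoneOn (fun s => 3/2*(s-1)^2 - g s) (Icc (1-δ) 1) :=
    anti_aux (fun t ht => hw t (hsub2 ht))
      (fun t ht => by linarith [(hDhi t (hsub2 ht) ht.2).2])
  intro t ht
  have h1l : (1:ℝ) ∈ Icc (1:ℝ) (1+δ) := by constructor <;> linarith
  have h1r : (1:ℝ) ∈ Icc (1-δ) (1:ℝ) := by constructor <;> linarith
  rcases le_total 1 t with h1t | h1t
  · have htl : t ∈ Icc (1:ℝ) (1+δ) := ⟨h1t, ht.2⟩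
    have v1 := hvmono h1l htl h1t
    have w1 := hwmono h1l htl h1t
    simp only [hg1] at v1 w1
    constructor <;> [skip; skip] <;> · nlinarith [v1, w1]
  · have htl : t ∈ Icc (1-δ) (1:ℝ) := ⟨ht.1, h1t⟩
    have v1 := hvanti htl h1r h1t
    have w1 := hwanti htl h1r h1t
    simp only [hg1] at v1 w1
    constructor <;> · nlinarith [v1, w1]

lemma ereal_coe_sum {n : ℕ} (h : Fin n → ℝ) :
    ((∑ i, h i : ℝ) : EReal) = ∑ i, ((h i : ℝ) : EReal) := by
  induction n with
  | zero => simp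
  | succ m ih => rw [Fin.sum_univ_succ, Fin.sum_univ_succ, EReal.coe_add, ih (fun i => h i.succ)]

/-- Assumption A: `f : ℝ → ℝ ∪ {+∞}` is lower semicontinuous, convex, equal to `+∞` on
negative reals, three times continuously differentiable on a neighborhood of `1`, with
`f 1 = f' 1 = 0` and `f'' 1 = 2`. -/
structure IsDivergenceFn (f : ℝ → EReal) : Prop where
  lsc : LowerSemicontinuous f
  convex : ∀ x y a b : ℝ, 0 ≤ a → 0 ≤ b → a + b = 1 →
    f (a * x + b * y) ≤ (a : EReal) * f x + (b : EReal) * f y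
  eq_top_of_neg : ∀ t : ℝ, t < 0 → f t = ⊤
  smooth : ∃ g : ℝ → ℝ, ∃ ε : ℝ, 0 < ε ∧
    (∀ t ∈ Set.Ioo (1 - ε) (1 + ε), f t = (g t : EReal)) ∧
    ContDiffOn ℝ 3 g (Set.Ioo (1 - ε) (1 + ε)) ∧
    g 1 = 0 ∧ deriv g 1 = 0 ∧ deriv (deriv g) 1 = 2

/-- The empirical `f`-divergence ball `Δ_{n,ρ}`. -/
def simplexBall (f : ℝ → EReal) (n : ℕ) (ρ : ℝ) : Set (Fin n → ℝ) :=
  {p | (∀ i, 0 ≤ p i) ∧ ∑ i, p i = 1 ∧ ∑ i, f ((n : ℝ) * p i) ≤ (ρ : EReal)}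

lemma convex_helper {f : ℝ → EReal} (hf : IsDivergenceFn f) (hf1 : f 1 = 0)
    {a x m : ℝ} (ha : 0 < a) (ha1 : a ≤ 1)
    (hm : (m : EReal) ≤ f (a * x + (1 - a) * 1)) : ((m / a : ℝ) : EReal) ≤ f x := by
  have hc := hf.convex x 1 a (1 - a) ha.le (by linarith) (by ring)
  rw [hf1, mul_zero, add_zero] at hc
  have key : (m : EReal) ≤ (a : EReal) * f x := le_trans hm hc
  rcases eq_or_ne (f x) ⊤ with h | h
  · rw [h]; exact le_top
  rcases eq_or_ne (f x) ⊥ with h' | h'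
  · rw [h', EReal.coe_mul_bot_of_pos ha] at key
    exact absurd (le_bot_iff.mp key) (EReal.coe_ne_bot m)
  lift f x to ℝ using ⟨h, h'⟩ with r
  rw [← EReal.coe_mul, EReal.coe_le_coe_iff] at key
  rw [EReal.coe_le_coe_iff]
  rw [div_le_iff₀ ha]
  linarith [key]

lemma exists_delta {f : ℝ → EReal} (hf : IsDivergenceFn f) :
    ∃ (g : ℝ → ℝ) (δ : ℝ), 0 < δ ∧ δ ≤ 1/2 ∧
      (∀ t ∈ Icc (1-δ) (1+δ), f t = (g t : EReal)) ∧
      (∀ t ∈ Icc (1-δ) (1+δ), 1/2*(t-1)^2 ≤ g t ∧ g t ≤ 3/2*(t-1)^2) := by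
  obtain ⟨g, ε, hε, heq, hC3, hg1, hg'1, hg''1⟩ := hf.smooth
  set U := Set.Ioo (1-ε) (1+ε) with hUdef
  have hU : IsOpen U := isOpen_Ioo
  have h1U : (1:ℝ) ∈ U := by constructor <;> simp <;> linarith
  have hd1U : ∀ t ∈ U, HasDerivAt g (deriv g t) t := by
    intro t ht
    exact (((hC3.differentiableOn (by norm_num)) t ht).differentiableAt
      (hU.mem_nhds ht)).hasDerivAt
  have hD2 : ContDiffOn ℝ 2 (deriv g) U := hC3.deriv_of_isOpen hU (by norm_num)
  have hd2U : ∀ t ∈ U, HasDerivAt (deriv g) (deriv (deriv g) t) t := by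
    intro t ht
    exact (((hD2.differentiableOn (by norm_num)) t ht).differentiableAt
      (hU.mem_nhds ht)).hasDerivAt
  have hD1 : ContDiffOn ℝ 1 (deriv (deriv g)) U := hD2.deriv_of_isOpen hU (by norm_num)
  have hat : ContinuousAt (deriv (deriv g)) 1 :=
    (hD1.continuousOn.continuousAt (hU.mem_nhds h1U))
  have htend : Filter.Tendsto (deriv (deriv g)) (nhds 1) (nhds 2) := by
    rw [← hg''1]; exact hat
  have hnb : {s | deriv (deriv g) s ∈ Ioo 1 3} ∈ nhds (1:ℝ) :=
    htend (Ioo_mem_nhds one_lt_two (by norm_num))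
  have hnb2 : ({s | deriv (deriv g) s ∈ Ioo 1 3} ∩ U) ∈ nhds (1:ℝ) :=
    Filter.inter_mem hnb (hU.mem_nhds h1U)
  obtain ⟨δ₁, hδ₁, hball⟩ := Metric.mem_nhds_iff.mp hnb2
  set δ := min (δ₁/2) (1/2) with hδdef
  have hδpos : 0 < δ := by positivity
  have hsub : Icc (1-δ) (1+δ) ⊆ {s | deriv (deriv g) s ∈ Ioo 1 3} ∩ U := by
    intro t ht
    apply hball
    rw [Metric.mem_ball, Real.dist_eq, abs_lt]
    have h1 : δ ≤ δ₁/2 := min_le_left _ _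
    obtain ⟨hta, htb⟩ := ht
    constructor <;> linarith
  have hsubU : Icc (1-δ) (1+δ) ⊆ U := fun t ht => (hsub ht).2
  refine ⟨g, δ, hδpos, min_le_right _ _, fun t ht => heq t (hsubU ht), ?_⟩
  exact quad_bounds hδpos (fun t ht => hd1U t (hsubU ht)) (fun t ht => hd2U t (hsubU ht))
    hg1 hg'1 (fun t ht => (hsub ht).1.1.le) (fun t ht => (hsub ht).1.2.le)

set_option maxHeartbeats 2000000 in
theorem stmt0 (f : ℝ → EReal) (hf : IsDivergenceFn f) (ρ : ℝ) (hρ : 0 < ρ) :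
    ∃ c C : ℝ, 0 < c ∧ c ≤ C ∧
      (∀ (n : ℕ) (p : Fin n → ℝ), p ∈ simplexBall f n ρ →
        Real.sqrt (∑ i, ((n : ℝ) * p i - 1) ^ 2) ≤ Real.sqrt (ρ * C)) ∧
      Real.sqrt (ρ * c) ≤
        sSup {r : ℝ | ∃ (n : ℕ) (p : Fin n → ℝ), p ∈ simplexBall f n ρ ∧
          r = Real.sqrt (∑ i, ((n : ℝ) * p i - 1) ^ 2)} := by
  obtain ⟨g, δ, hδpos, hδhalf, heq, hquad⟩ := exists_delta hf
  have h1mem : (1:ℝ) ∈ Icc (1-δ) (1+δ) := by constructor <;> linarith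
  have hlmem : (1-δ) ∈ Icc (1-δ) (1+δ) := by constructor <;> linarith
  have hrmem : (1+δ) ∈ Icc (1-δ) (1+δ) := by constructor <;> linarith
  have hg1 : g 1 = 0 := by
    have := hquad 1 h1mem
    simp at this
    nlinarith [this.1, this.2]
  have hf1 : f 1 = 0 := by rw [heq 1 h1mem, hg1]; rfl
  have hgl : 1/2*δ^2 ≤ g (1-δ) := by
    have := (hquad (1-δ) hlmem).1
    nlinarith [this]
  have hgr : 1/2*δ^2 ≤ g (1+δ) := by
    have := (hquad (1+δ) hrmem).1
    nlinarith [this]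
  obtain ⟨lb, hlbdef⟩ : ∃ lb : ℝ → ℝ, lb =
      fun t => if t ≤ 1-δ then δ/2*(t-1)^2 else if t < 1+δ then 1/2*(t-1)^2 else δ/2*(t-1) :=
    ⟨_, rfl⟩
  have hlb0 : ∀ t : ℝ, 0 ≤ lb t := by
    intro t
    rw [hlbdef]
    dsimp only
    split_ifs with h1 h2
    · positivity
    · positivity
    · push_neg at h2; nlinarith
  -- lower bound on f
  have hlbf : ∀ t : ℝ, 0 ≤ t → ((lb t : ℝ) : EReal) ≤ f t := by
    intro t ht0
    rw [hlbdef]; dsimp only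
    split_ifs with h1 h2
    · -- t ≤ 1 - δ
      have hlt : 0 < 1 - t := by linarith
      have ha : 0 < δ/(1-t) := by positivity
      have ha1 : δ/(1-t) ≤ 1 := by rw [div_le_one hlt]; linarith
      have harg : δ/(1-t)*t + (1-δ/(1-t))*1 = 1-δ := by field_simp; ring
      have hm : ((g (1-δ) : ℝ) : EReal) ≤ f (δ/(1-t)*t + (1-δ/(1-t))*1) := by
        rw [harg, heq (1-δ) hlmem]
      have hkey := convex_helper hf hf1 ha ha1 hm
      refine le_trans ?_ hkey
      rw [EReal.coe_le_coe_iff, le_div_iff₀ ha]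
      have heq2 : δ/2*(t-1)^2 * (δ/(1-t)) = δ^2*(1-t)/2 := by field_simp; ring
      rw [heq2]
      nlinarith [hgl]
    · -- 1 - δ < t < 1 + δ
      push_neg at h1
      have htJ : t ∈ Icc (1-δ) (1+δ) := ⟨h1.le, h2.le⟩
      rw [heq t htJ, EReal.coe_le_coe_iff]
      exact (hquad t htJ).1
    · -- t ≥ 1 + δ
      push_neg at h1 h2
      have hlt : 0 < t - 1 := by linarith
      have ha : 0 < δ/(t-1) := by positivity
      have ha1 : δ/(t-1) ≤ 1 := by rw [div_le_one hlt]; linarith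
      have harg : δ/(t-1)*t + (1-δ/(t-1))*1 = 1+δ := by field_simp; ring
      have hm : ((g (1+δ) : ℝ) : EReal) ≤ f (δ/(t-1)*t + (1-δ/(t-1))*1) := by
        rw [harg, heq (1+δ) hrmem]
      have hkey := convex_helper hf hf1 ha ha1 hm
      refine le_trans ?_ hkey
      rw [EReal.coe_le_coe_iff, le_div_iff₀ ha]
      have heq2 : δ/2*(t-1) * (δ/(t-1)) = δ^2/2 := by field_simp
      rw [heq2]
      nlinarith [hgr]
  obtain ⟨C, hCdef⟩ : ∃ C : ℝ, C = max (max (2/δ) 2) (4*ρ/δ^2) := ⟨_, rfl⟩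
  have hC2 : (2:ℝ) ≤ C := hCdef ▸ le_trans (le_max_right _ _) (le_max_left _ _)
  have hCpos : 0 < C := by linarith
  have hkeyq : ∀ t : ℝ, 0 ≤ t → lb t ≤ ρ → (t-1)^2 ≤ C * lb t := by
    intro t ht0 htρ
    have hCa : 2/δ ≤ C := hCdef ▸ le_trans (le_max_left _ _) (le_max_left _ _)
    have hCb : 4*ρ/δ^2 ≤ C := hCdef ▸ le_max_right _ _
    rw [hlbdef] at htρ ⊢
    dsimp only at htρ ⊢
    split_ifs at htρ ⊢ with h1 h2
    · have e1 : (2/δ)*(δ/2*(t-1)^2) = (t-1)^2 := by field_simp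
      have h5 := mul_le_mul_of_nonneg_right hCa (show (0:ℝ) ≤ δ/2*(t-1)^2 by positivity)
      linarith [h5]
    · have e1 : (2:ℝ)*(1/2*(t-1)^2) = (t-1)^2 := by ring
      have h5 := mul_le_mul_of_nonneg_right hC2 (show (0:ℝ) ≤ 1/2*(t-1)^2 by positivity)
      linarith [h5]
    · push_neg at h1 h2
      have h4 : (0:ℝ) ≤ t - 1 := by linarith
      have h3 : δ * (t-1) ≤ 2*ρ := by linarith
      have hδ2 : (0:ℝ) < δ^2 := by positivity
      rw [← mul_le_mul_iff_of_pos_right hδ2]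
      have h6 : (0:ℝ) ≤ δ/2*(t-1) * δ^2 := mul_nonneg (mul_nonneg (by positivity) h4) (by positivity)
      have h7 := mul_le_mul_of_nonneg_right hCb h6
      have e2 : (4*ρ/δ^2) * (δ/2*(t-1) * δ^2) = 2*ρ*(δ*(t-1)) := by field_simp; ring
      nlinarith [mul_le_mul_of_nonneg_right h3 (mul_nonneg hδpos.le h4), h7, e2]
  -- part (i)
  have parti : ∀ (n : ℕ) (p : Fin n → ℝ), p ∈ simplexBall f n ρ →
      (∑ i, ((n : ℝ) * p i - 1) ^ 2) ≤ ρ * C := by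
    intro n p hp
    obtain ⟨hpos, hsum1, hfsum⟩ := hp
    have hnn : ∀ i, (0:ℝ) ≤ (n : ℝ) * p i := fun i => mul_nonneg (Nat.cast_nonneg n) (hpos i)
    have h1 : (∑ i, ((lb ((n:ℝ) * p i) : ℝ) : EReal)) ≤ (ρ : EReal) :=
      le_trans (Finset.sum_le_sum fun i _ => hlbf _ (hnn i)) hfsum
    rw [← ereal_coe_sum] at h1
    have hsumlb : ∑ i, lb ((n:ℝ) * p i) ≤ ρ := EReal.coe_le_coe_iff.mp h1
    have hone : ∀ i, lb ((n:ℝ) * p i) ≤ ρ := fun i =>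
      le_trans (Finset.single_le_sum (f := fun j => lb ((n:ℝ) * p j))
        (fun j _ => hlb0 _) (Finset.mem_univ i)) hsumlb
    calc ∑ i, ((n : ℝ) * p i - 1) ^ 2 ≤ ∑ i, C * lb ((n:ℝ) * p i) :=
          Finset.sum_le_sum fun i _ => hkeyq _ (hnn i) (hone i)
      _ = C * ∑ i, lb ((n:ℝ) * p i) := by rw [Finset.mul_sum]
      _ ≤ C * ρ := mul_le_mul_of_nonneg_left hsumlb hCpos.le
      _ = ρ * C := mul_comm _ _
  -- the witness for part (ii)
  obtain ⟨t₀, ht₀def⟩ : ∃ t₀ : ℝ, t₀ = min δ (Real.sqrt (ρ/3)) := ⟨_, rfl⟩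
  have ht₀pos : 0 < t₀ := ht₀def ▸ lt_min hδpos (Real.sqrt_pos.mpr (by linarith))
  have ht₀δ : t₀ ≤ δ := ht₀def ▸ min_le_left _ _
  have ht₀sq : t₀^2 ≤ ρ/3 := by
    have h1 : t₀ ≤ Real.sqrt (ρ/3) := ht₀def ▸ min_le_right _ _
    nlinarith [Real.sq_sqrt (show (0:ℝ) ≤ ρ/3 by linarith), h1, ht₀pos]
  have hp1mem : 1 + t₀ ∈ Icc (1-δ) (1+δ) := by constructor <;> linarith
  have hp2mem : 1 - t₀ ∈ Icc (1-δ) (1+δ) := by constructor <;> linarith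
  obtain ⟨p, hpdef⟩ : ∃ p : Fin 2 → ℝ, p = ![(1+t₀)/2, (1-t₀)/2] := ⟨_, rfl⟩
  have hc1 : ((2:ℕ):ℝ) * p 0 = 1 + t₀ := by simp [hpdef]; ring
  have hc2 : ((2:ℕ):ℝ) * p 1 = 1 - t₀ := by simp [hpdef]; ring
  have hmem : p ∈ simplexBall f 2 ρ := by
    refine ⟨?_, ?_, ?_⟩
    · intro i
      fin_cases i <;> simp [hpdef] <;> linarith
    · rw [Fin.sum_univ_two]; simp [hpdef]; ring
    · rw [Fin.sum_univ_two, hc1, hc2, heq _ hp1mem, heq _ hp2mem, ← EReal.coe_add,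
        EReal.coe_le_coe_iff]
      have hb1 := (hquad _ hp1mem).2
      have hb2 := (hquad _ hp2mem).2
      nlinarith [hb1, hb2]
  have hsum2 : ∑ i, (((2:ℕ):ℝ) * p i - 1) ^ 2 = 2 * t₀^2 := by
    rw [Fin.sum_univ_two, hc1, hc2]; ring
  obtain ⟨c, hcdef⟩ : ∃ c : ℝ, c = min C (2*t₀^2/ρ) := ⟨_, rfl⟩
  have hcpos : 0 < c := hcdef ▸ lt_min hCpos (by positivity)
  have hcC : c ≤ C := hcdef ▸ min_le_left _ _
  refine ⟨c, C, hcpos, hcC, ?_, ?_⟩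
  · intro n p hp
    exact Real.sqrt_le_sqrt (parti n p hp)
  · have hr₀S : Real.sqrt (∑ i, (((2:ℕ):ℝ) * p i - 1) ^ 2) ∈
        {r : ℝ | ∃ (n : ℕ) (q : Fin n → ℝ), q ∈ simplexBall f n ρ ∧
          r = Real.sqrt (∑ i, ((n : ℝ) * q i - 1) ^ 2)} := ⟨2, p, hmem, rfl⟩
    have hbdd : BddAbove {r : ℝ | ∃ (n : ℕ) (q : Fin n → ℝ), q ∈ simplexBall f n ρ ∧
        r = Real.sqrt (∑ i, ((n : ℝ) * q i - 1) ^ 2)} := by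
      refine ⟨Real.sqrt (ρ * C), ?_⟩
      rintro r ⟨n, q, hq, rfl⟩
      exact Real.sqrt_le_sqrt (parti n q hq)
    refine le_trans ?_ (le_csSup hbdd hr₀S)
    apply Real.sqrt_le_sqrt
    rw [hsum2]
    have : c ≤ 2*t₀^2/ρ := hcdef ▸ min_le_right _ _
    calc ρ * c ≤ ρ * (2*t₀^2/ρ) := mul_le_mul_of_nonneg_left this hρ.le
      _ = 2 * t₀^2 := by field_simp
end
end

section
/- Let n ∈ ℕ, z ∈ ℝⁿ, ρ > 0, a ≥ 1, and ε > 0. Define U := { u ∈ ℝⁿ : Σ_{i=1}^n u_i = 0, max_i |n u_i| ≤ ε, a · Σ_{i=1}^n (n u_i)² ≤ ρ }. If max_{i ≤ n} |z_i − z̄| / √n ≤ ε · s_n(z) · √(a/ρ), then sup_{u ∈ U} uᵀz = √(ρ s_n(z)² / n) / √a. -/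
open MeasureTheory ProbabilityTheory Filter Set

noncomputable section

/-- Sample mean `z̄ = (1/n) ∑ z_i`. -/
def sampleMean {n : ℕ} (z : Fin n → ℝ) : ℝ := (∑ i, z i) / n

/-- Sample variance `s_n(z)² = (1/n) ∑ (z_i − z̄)²`. -/
def sampleVar {n : ℕ} (z : Fin n → ℝ) : ℝ := (∑ i, (z i - sampleMean z) ^ 2) / n

/-- The Huber function `h_ε`. -/
def huber (ε t : ℝ) : ℝ := if |t| ≤ ε then t ^ 2 / 2 else ε * |t| - ε ^ 2 / 2

theorem stmt1 (n : ℕ) (hn : 0 < n) (z : Fin n → ℝ) (ρ a ε : ℝ)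
    (hρ : 0 < ρ) (ha : 1 ≤ a) (hε : 0 < ε)
    (hmax : ∀ i, |z i - sampleMean z| / Real.sqrt n ≤
      ε * Real.sqrt (sampleVar z) * Real.sqrt (a / ρ)) :
    sSup ((fun u : Fin n → ℝ => ∑ i, u i * z i) ''
        {u | ∑ i, u i = 0 ∧ (∀ i, |(n : ℝ) * u i| ≤ ε) ∧
          a * ∑ i, ((n : ℝ) * u i) ^ 2 ≤ ρ}) =
      Real.sqrt (ρ * sampleVar z / n) / Real.sqrt a := by
  have hnpos : (0:ℝ) < n := Nat.cast_pos.mpr hn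
  have ha0 : (0:ℝ) < a := lt_of_lt_of_le one_pos ha
  set m := sampleMean z with hm
  set s2 := sampleVar z with hs2
  have hs2nn : 0 ≤ s2 := div_nonneg (Finset.sum_nonneg fun i _ => sq_nonneg _) hnpos.le
  have hS : ∑ i, (z i - m)^2 = n * s2 := by
    rw [hs2]; unfold sampleVar; rw [← hm]; field_simp
  have hzsum : ∑ i, z i = n * m := by
    rw [hm]; unfold sampleMean; field_simp
  have hdevsum : ∑ i, (z i - m) = 0 := by
    simp [Finset.sum_sub_distrib, hzsum, Finset.card_univ, mul_comm]
  set R := Real.sqrt (ρ * s2 / n) / Real.sqrt a with hR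
  have hRnn : 0 ≤ R := div_nonneg (Real.sqrt_nonneg _) (Real.sqrt_nonneg _)
  have hRsq : R^2 = ρ * s2 / n / a := by
    rw [hR, div_pow, Real.sq_sqrt (by positivity), Real.sq_sqrt ha0.le]
  apply IsGreatest.csSup_eq
  constructor
  · -- membership: R is attained
    rcases eq_or_lt_of_le hs2nn with h0 | hs2pos
    · -- s2 = 0
      refine ⟨0, ⟨by simp, fun i => by simp [hε.le], by simp [hρ.le]⟩, ?_⟩
      simp [hR, ← h0]
    · set c := Real.sqrt (ρ / (a * n^3 * s2)) with hc
      have hc2 : c^2 = ρ / (a * n^3 * s2) := Real.sq_sqrt (by positivity)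
      have hcpos : 0 < c := Real.sqrt_pos.mpr (by positivity)
      refine ⟨fun i => c * (z i - m), ⟨?_, ?_, ?_⟩, ?_⟩
      · rw [← Finset.mul_sum, hdevsum, mul_zero]
      · intro i
        have key : (n:ℝ) * c * (Real.sqrt n * Real.sqrt s2 * Real.sqrt (a/ρ)) = 1 := by
          set x := (n:ℝ) * c * (Real.sqrt n * Real.sqrt s2 * Real.sqrt (a/ρ)) with hx
          have hxnn : 0 ≤ x := by positivity
          have hx2 : x^2 = 1 := by
            rw [hx]
            have : ((n:ℝ) * c * (Real.sqrt n * Real.sqrt s2 * Real.sqrt (a/ρ)))^2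
                = (n:ℝ)^2 * c^2 * ((Real.sqrt n)^2 * (Real.sqrt s2)^2 * (Real.sqrt (a/ρ))^2) := by
              ring
            rw [this, hc2, Real.sq_sqrt hnpos.le, Real.sq_sqrt hs2nn,
              Real.sq_sqrt (show (0:ℝ) ≤ a/ρ by positivity)]
            field_simp
          calc x = Real.sqrt (x^2) := (Real.sqrt_sq hxnn).symm
            _ = 1 := by rw [hx2, Real.sqrt_one]
        have hzi : |z i - m| ≤ Real.sqrt n * (ε * Real.sqrt s2 * Real.sqrt (a/ρ)) := by
          have := hmax i
          rw [div_le_iff₀ (Real.sqrt_pos.mpr hnpos)] at this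
          linarith [this]
        calc |(n:ℝ) * (c * (z i - m))| = (n:ℝ) * c * |z i - m| := by
              rw [abs_mul, abs_mul, abs_of_nonneg hnpos.le, abs_of_nonneg hcpos.le]; ring
          _ ≤ (n:ℝ) * c * (Real.sqrt n * (ε * Real.sqrt s2 * Real.sqrt (a/ρ))) := by
              apply mul_le_mul_of_nonneg_left hzi (by positivity)
          _ = ε * ((n:ℝ) * c * (Real.sqrt n * Real.sqrt s2 * Real.sqrt (a/ρ))) := by ring
          _ = ε := by rw [key, mul_one]
      · have hq : ∑ i, ((n:ℝ) * (c * (z i - m)))^2 = (n:ℝ)^2 * c^2 * (n * s2) := by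
          rw [← hS, Finset.mul_sum]
          apply Finset.sum_congr rfl
          intro i _; ring
        rw [hq, hc2]
        have : a * ((n:ℝ)^2 * (ρ / (a * n^3 * s2)) * (n * s2)) = ρ := by
          field_simp
        rw [this]
      · -- value
        have hv : ∑ i, (c * (z i - m)) * z i = c * (n * s2) := by
          have : ∀ i, (c * (z i - m)) * z i = c * ((z i - m)^2) + (c * m) * (z i - m) := by
            intro i; ring
          rw [Finset.sum_congr rfl (fun i _ => this i), Finset.sum_add_distrib,
            ← Finset.mul_sum, ← Finset.mul_sum, hdevsum, hS, mul_zero, add_zero]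
        show ∑ i, (c * (z i - m)) * z i = R
        rw [hv]
        have hvnn : 0 ≤ c * (n * s2) := by positivity
        have hsq : (c * ((n:ℝ) * s2))^2 = R^2 := by
          rw [hRsq, mul_pow, mul_pow, hc2]
          field_simp
        calc c * ((n:ℝ) * s2) = Real.sqrt ((c * ((n:ℝ) * s2))^2) := (Real.sqrt_sq hvnn).symm
          _ = Real.sqrt (R^2) := by rw [hsq]
          _ = R := Real.sqrt_sq hRnn
  · -- upper bound
    rintro x ⟨u, ⟨husum, habs, hquad⟩, rfl⟩
    simp only
    have h1 : ∑ i, u i * z i = ∑ i, u i * (z i - m) := by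
      have : ∑ i, u i * (z i - m) = ∑ i, u i * z i - m * ∑ i, u i := by
        rw [Finset.mul_sum, ← Finset.sum_sub_distrib]
        apply Finset.sum_congr rfl; intro i _; ring
      rw [this, husum, mul_zero, sub_zero]
    have hcs := Finset.sum_mul_sq_le_sq_mul_sq Finset.univ u (fun i => z i - m)
    have hu2 : ∑ i, ((n:ℝ) * u i)^2 = (n:ℝ)^2 * ∑ i, (u i)^2 := by
      rw [Finset.mul_sum]; apply Finset.sum_congr rfl; intro i _; ring
    rw [hu2] at hquad
    have husq : ∑ i, (u i)^2 ≤ ρ / (a * n^2) := by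
      rw [le_div_iff₀ (by positivity)]; nlinarith
    have ht2 : (∑ i, u i * z i)^2 ≤ R^2 := by
      rw [h1, hRsq]
      calc (∑ i, u i * (z i - m))^2 ≤ (∑ i, (u i)^2) * ∑ i, (z i - m)^2 := hcs
        _ ≤ (ρ / (a * n^2)) * (n * s2) := by
            apply mul_le_mul husq (le_of_eq hS) (Finset.sum_nonneg fun i _ => sq_nonneg _)
              (by positivity)
        _ = ρ * s2 / n / a := by field_simp
    calc ∑ i, u i * z i ≤ |∑ i, u i * z i| := le_abs_self _
      _ = Real.sqrt ((∑ i, u i * z i)^2) := (Real.sqrt_sq_eq_abs _).symm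
      _ ≤ Real.sqrt (R^2) := Real.sqrt_le_sqrt ht2
      _ = R := Real.sqrt_sq hRnn
end
end

section
/- Let n ∈ ℕ, z ∈ ℝⁿ, ρ > 0, b ∈ (0, 1], and ε > 0. Define V := { u ∈ ℝⁿ : Σ_{i=1}^n u_i = 0, Σ_{i=1}^n h_ε(n u_i) ≤ ρ / (2b) }. If max_{i ≤ n} |z_i − z̄| / √n ≤ ε · s_n(z) · √(b/ρ), then sup_{u ∈ V} uᵀz ≤ √(ρ s_n(z)² / n) / √b. -/
open MeasureTheory ProbabilityTheory Filter Set

noncomputable section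

lemma eq_of_sq_eq {x y : ℝ} (hx : 0 ≤ x) (hy : 0 ≤ y) (h : x ^ 2 = y ^ 2) : x = y := by
  nlinarith

lemma huber_fenchel {ε t s : ℝ} (hs : |s| ≤ ε) :
    t * s ≤ huber ε t + s ^ 2 / 2 := by
  rw [huber]
  rcases abs_le.1 hs with ⟨hs1, hs2⟩
  split_ifs with h
  · nlinarith [sq_nonneg (t - s)]
  · push_neg at h
    rcases le_or_gt 0 t with ht | ht
    · rw [abs_of_nonneg ht] at h ⊢
      nlinarith [sq_nonneg (s - ε), sq_nonneg (s + ε)]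
    · rw [abs_of_neg ht] at h ⊢
      nlinarith [sq_nonneg (s - ε), sq_nonneg (s + ε)]

theorem stmt2 (n : ℕ) (hn : 0 < n) (z : Fin n → ℝ) (ρ b ε : ℝ)
    (hρ : 0 < ρ) (hb0 : 0 < b) (hb1 : b ≤ 1) (hε : 0 < ε)
    (hmax : ∀ i, |z i - sampleMean z| / Real.sqrt n ≤
      ε * Real.sqrt (sampleVar z) * Real.sqrt (b / ρ)) :
    sSup ((fun u : Fin n → ℝ => ∑ i, u i * z i) ''
        {u | ∑ i, u i = 0 ∧ ∑ i, huber ε ((n : ℝ) * u i) ≤ ρ / (2 * b)}) ≤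
      Real.sqrt (ρ * sampleVar z / n) / Real.sqrt b := by
  set m := sampleMean z with hm
  set v := sampleVar z with hvdef
  have hnR : (0 : ℝ) < (n : ℝ) := by exact_mod_cast hn
  have hsum_sq : ∑ i, (z i - m) ^ 2 = (n : ℝ) * v := by
    rw [hvdef, sampleVar]; field_simp; rfl
  have hv : 0 ≤ v := by
    rw [hvdef, sampleVar]
    exact div_nonneg (Finset.sum_nonneg fun i _ => sq_nonneg _) hnR.le
  have hRHS : 0 ≤ Real.sqrt (ρ * v / n) / Real.sqrt b := by positivity
  apply Real.sSup_le _ hRHS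
  rintro x ⟨u, ⟨hu0, huh⟩, rfl⟩
  simp only
  have hkey : ∑ i, u i * z i = ∑ i, u i * (z i - m) := by
    simp only [mul_sub]
    rw [Finset.sum_sub_distrib, ← Finset.sum_mul, hu0]
    ring
  by_cases hv0 : v = 0
  · have hz : ∀ i, z i = m := fun i => by
      have h1 := hmax i
      rw [hv0, Real.sqrt_zero] at h1
      have h2 : |z i - m| / Real.sqrt n ≤ 0 := by linarith [h1]
      have h3 : 0 < Real.sqrt n := Real.sqrt_pos.2 hnR
      have := (div_nonpos_iff.1 h2)
      have h4 : |z i - m| ≤ 0 := by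
        rcases this with ⟨h5, h6⟩ | ⟨h5, h6⟩
        · linarith
        · exact h5
      have := abs_nonneg (z i - m)
      have : |z i - m| = 0 := le_antisymm h4 this
      linarith [abs_eq_zero.1 this]
    have : ∑ i, u i * z i = 0 := by
      rw [hkey]
      apply Finset.sum_eq_zero
      intro i _
      simp [hz i]
    rw [this]; exact hRHS
  · have hvpos : 0 < v := lt_of_le_of_ne hv (Ne.symm hv0)
    set c := Real.sqrt (ρ / (b * n * v)) with hcdef
    have hcpos : 0 < c := Real.sqrt_pos.2 (by positivity)
    have hc2 : c ^ 2 = ρ / (b * n * v) := Real.sq_sqrt (by positivity)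
    -- |c * (z i - m)| ≤ ε
    have hsi : ∀ i, |c * (z i - m)| ≤ ε := by
      intro i
      have h1 := hmax i
      have hsn : 0 < Real.sqrt n := Real.sqrt_pos.2 hnR
      have h2 : |z i - m| ≤ ε * Real.sqrt v * Real.sqrt (b / ρ) * Real.sqrt n :=
        (div_le_iff₀ hsn).1 h1
      have hK : c * (Real.sqrt v * Real.sqrt (b / ρ) * Real.sqrt n) = 1 := by
        apply eq_of_sq_eq (by positivity) zero_le_one
        rw [mul_pow, mul_pow, mul_pow, hc2, Real.sq_sqrt hv,
          Real.sq_sqrt (by positivity : (0:ℝ) ≤ b / ρ), Real.sq_sqrt hnR.le]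
        field_simp
      calc |c * (z i - m)| = c * |z i - m| := by
            rw [abs_mul, abs_of_pos hcpos]
        _ ≤ c * (ε * Real.sqrt v * Real.sqrt (b / ρ) * Real.sqrt n) :=
            mul_le_mul_of_nonneg_left h2 hcpos.le
        _ = ε * (c * (Real.sqrt v * Real.sqrt (b / ρ) * Real.sqrt n)) := by ring
        _ = ε := by rw [hK]; ring
    -- Fenchel step
    have hstep : ∀ i, ((n : ℝ) * u i) * (c * (z i - m)) ≤
        huber ε ((n : ℝ) * u i) + (c * (z i - m)) ^ 2 / 2 :=
      fun i => huber_fenchel (hsi i)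
    have hsum : ∑ i, ((n : ℝ) * u i) * (c * (z i - m)) ≤
        ρ / (2 * b) + c ^ 2 * ((n : ℝ) * v) / 2 := by
      calc ∑ i, ((n : ℝ) * u i) * (c * (z i - m))
          ≤ ∑ i, (huber ε ((n : ℝ) * u i) + (c * (z i - m)) ^ 2 / 2) :=
            Finset.sum_le_sum fun i _ => hstep i
        _ = ∑ i, huber ε ((n : ℝ) * u i) + c ^ 2 * (∑ i, (z i - m) ^ 2) / 2 := by
            have haux : ∑ i, (c * (z i - m)) ^ 2 = c ^ 2 * ∑ i, (z i - m) ^ 2 := by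
              rw [Finset.mul_sum]
              exact Finset.sum_congr rfl fun i _ => by ring
            rw [Finset.sum_add_distrib, ← Finset.sum_div, haux]
        _ ≤ ρ / (2 * b) + c ^ 2 * ((n : ℝ) * v) / 2 := by
            rw [hsum_sq]; linarith [huh]
    have hmain : ∑ i, u i * z i ≤ ρ / (b * n * c) := by
      rw [hkey]
      have hne : (0:ℝ) < (n : ℝ) * c := by positivity
      have heq : ∑ i, u i * (z i - m) =
          (1 / ((n : ℝ) * c)) * ∑ i, ((n : ℝ) * u i) * (c * (z i - m)) := by
        rw [Finset.mul_sum]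
        congr 1; ext i; field_simp
      rw [heq]
      have hb2 : ρ / (2 * b) + c ^ 2 * ((n : ℝ) * v) / 2 = ρ / b := by
        rw [hc2]
        field_simp
        ring
      calc (1 / ((n : ℝ) * c)) * ∑ i, ((n : ℝ) * u i) * (c * (z i - m))
          ≤ (1 / ((n : ℝ) * c)) * (ρ / b) := by
            apply mul_le_mul_of_nonneg_left _ (by positivity)
            rw [← hb2]; exact hsum
        _ = ρ / (b * n * c) := by
            rw [one_div_mul_eq_div, div_div, ← mul_assoc]
    refine hmain.trans (le_of_eq ?_)
    apply eq_of_sq_eq (by positivity) hRHS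
    rw [div_pow, div_pow, mul_pow, mul_pow, hc2,
      Real.sq_sqrt (by positivity : (0:ℝ) ≤ ρ * v / n),
      Real.sq_sqrt hb0.le]
    field_simp
end
end

section
/- Let f satisfy Assumption A. Then there exist constants c > 0 and C < ∞, depending only on f, such that for all ε ∈ (0, c]: (i) f(1 + t) ≥ 2(1 − Cε) · h_ε(t) for all t ≥ −1; and (ii) f(1 + t) ≤ (1 + Cε) · t² for all t with |t| ≤ ε. -/
open MeasureTheory ProbabilityTheory Filter Set

noncomputable section

/-- Convexity chord bound in `EReal`: the value of `f` at an outer point `x` is bounded below by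
the linear extrapolation through two points where `f` is known to be real. -/
lemma chord_aux {f : ℝ → EReal}
    (hconv : ∀ x y a b : ℝ, 0 ≤ a → 0 ≤ b → a + b = 1 →
      f (a * x + b * y) ≤ (a : EReal) * f x + (b : EReal) * f y)
    {x y m a b gm gy : ℝ} (ha : 0 < a) (hb : 0 ≤ b) (hab : a + b = 1)
    (hm' : a * x + b * y = m) (hm : f m = (gm : EReal)) (hy : f y = (gy : EReal)) :
    (((gm - b * gy) / a : ℝ) : EReal) ≤ f x := by
  have h := hconv x y a b ha.le hb hab
  rw [hm', hm, hy] at h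
  cases hx : f x with
  | bot =>
      rw [hx, EReal.coe_mul_bot_of_pos (by exact_mod_cast ha), EReal.bot_add] at h
      exact absurd h (by simp)
  | top => exact le_top
  | coe xr =>
      rw [hx, ← EReal.coe_mul, ← EReal.coe_mul, ← EReal.coe_add, EReal.coe_le_coe_iff] at h
      rw [EReal.coe_le_coe_iff, div_le_iff₀ ha]
      nlinarith

/-- Real arithmetic for the chord lower bound. -/
lemma chord_arith {L C ε s g1 g2 : ℝ} (hL : 0 ≤ L) (hC : C = 20 * L + 20) (hε : 0 < ε)
    (hs : 2 * ε < s) (h1 : |g1 - ε ^ 2| ≤ L * ε ^ 3) (h2 : |g2 - 4 * ε ^ 2| ≤ 8 * (L * ε ^ 3)) :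
    (1 - C * ε) * (2 * ε * s - ε ^ 2) ≤ ((s - ε) * g2 - (s - 2 * ε) * g1) / ε := by
  subst hC
  rw [le_div_iff₀ hε]
  obtain ⟨h1a, h1b⟩ := abs_le.mp h1
  obtain ⟨h2a, h2b⟩ := abs_le.mp h2
  have hse : (0:ℝ) < s - ε := by linarith
  have hs2 : (0:ℝ) ≤ s - 2 * ε := by linarith
  have A : -(8 * (L * ε ^ 3)) * (s - ε) ≤ (g2 - 4 * ε ^ 2) * (s - ε) :=
    mul_le_mul_of_nonneg_right h2a hse.le
  have B : (g1 - ε ^ 2) * (s - 2 * ε) ≤ L * ε ^ 3 * (s - 2 * ε) :=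
    mul_le_mul_of_nonneg_right h1b hs2
  have E1 : 0 ≤ ε ^ 2 * (s - 2 * ε) := by positivity
  have E2 : 0 ≤ ε ^ 3 * (s - 2 * ε) := by positivity
  have E3 : 0 ≤ L * (ε ^ 3 * (s - 2 * ε)) := by positivity
  have E4 : 0 ≤ L * ε ^ 4 := by positivity
  have E5 : 0 ≤ ε ^ 3 := by positivity
  nlinarith [A, B, E1, E2, E3, E4, E5]

/-- Cubic Taylor-type bound for a `C³` function with `g 1 = 0`, `g' 1 = 0`, `g'' 1 = 2`. -/
lemma taylor_cubic {g : ℝ → ℝ} {δ : ℝ} (hδ : 0 < δ)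
    (hg3 : ContDiffOn ℝ 3 g (Set.Ioo (1 - δ) (1 + δ)))
    (hg0 : g 1 = 0) (hg1 : deriv g 1 = 0) (hg2 : deriv (deriv g) 1 = 2) :
    ∃ L r : ℝ, 0 < r ∧ 0 ≤ L ∧
      (∀ u : ℝ, |u| ≤ r → (1 + u) ∈ Set.Ioo (1 - δ) (1 + δ)) ∧
      (∀ u : ℝ, |u| ≤ r → |g (1 + u) - u ^ 2| ≤ L * |u| ^ 3) := by
  set S := Set.Ioo (1 - δ) (1 + δ) with hSdef
  have hS : IsOpen S := isOpen_Ioo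
  set r := δ / 2 with hrdef
  have hr : 0 < r := by positivity
  have hdom : ∀ u : ℝ, |u| ≤ r → (1 + u) ∈ S := by
    intro u hu
    have h := abs_le.mp hu
    exact ⟨by linarith [h.1], by linarith [h.2]⟩
  have hIcc : Set.Icc (1 - r) (1 + r) ⊆ S := by
    intro x hx
    constructor <;> [linarith [hx.1]; linarith [hx.2]]
  have hD1 : ContDiffOn ℝ 2 (deriv g) S := hg3.deriv_of_isOpen hS (by norm_num)
  have hD2 : ContDiffOn ℝ 1 (deriv (deriv g)) S := hD1.deriv_of_isOpen hS (by norm_num)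
  have hD3c : ContinuousOn (deriv (deriv (deriv g))) S :=
    hD2.continuousOn_deriv_of_isOpen hS (le_refl 1)
  have hgd : ∀ x ∈ S, DifferentiableAt ℝ g x := fun x hx =>
    (hg3.differentiableOn (by norm_num)).differentiableAt (hS.mem_nhds hx)
  have hD1d : ∀ x ∈ S, DifferentiableAt ℝ (deriv g) x := fun x hx =>
    (hD1.differentiableOn (by norm_num)).differentiableAt (hS.mem_nhds hx)
  have hD2d : ∀ x ∈ S, DifferentiableAt ℝ (deriv (deriv g)) x := fun x hx =>
    (hD2.differentiableOn (by norm_num)).differentiableAt (hS.mem_nhds hx)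
  obtain ⟨L0, hL0⟩ := (isCompact_Icc (a := 1 - r) (b := 1 + r)).exists_bound_of_continuousOn
    (hD3c.mono hIcc)
  set L : ℝ := max L0 0 with hLdef
  have hL : 0 ≤ L := le_max_right _ _
  have h1mem : (1 : ℝ) ∈ Set.Icc (1 - r) (1 + r) := by constructor <;> linarith
  have step1 : ∀ x ∈ Set.Icc (1 - r) (1 + r), |deriv (deriv g) x - 2| ≤ L * |x - 1| := by
    intro x hx
    have := (convex_Icc (1 - r) (1 + r)).norm_image_sub_le_of_norm_hasDerivWithin_le
      (C := L) (f := deriv (deriv g)) (f' := deriv (deriv (deriv g)))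
      (fun y hy => ((hD2d y (hIcc hy)).hasDerivAt).hasDerivWithinAt)
      (fun y hy => le_trans (hL0 y hy) (le_max_left _ _)) h1mem hx
    simpa [hg2, Real.norm_eq_abs] using this
  have key : ∀ t : ℝ, ∀ x ∈ Set.uIcc 1 (1 + t), |x - 1| ≤ |t| := by
    intro t x hx
    rcases le_total 0 t with h | h
    · rw [Set.uIcc_of_le (by linarith)] at hx
      rw [abs_of_nonneg (by linarith [hx.1]), abs_of_nonneg h]; linarith [hx.2]
    · rw [Set.uIcc_of_ge (by linarith)] at hx
      rw [abs_of_nonpos (by linarith [hx.2]), abs_of_nonpos h]; linarith [hx.1]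
  have hsub : ∀ t : ℝ, |t| ≤ r → Set.uIcc 1 (1 + t) ⊆ Set.Icc (1 - r) (1 + r) := by
    intro t ht x hx
    have h' := abs_le.mp (le_trans (key t x hx) ht)
    constructor <;> [linarith [h'.1]; linarith [h'.2]]
  have step2 : ∀ t : ℝ, |t| ≤ r → |deriv g (1 + t) - 2 * t| ≤ L * t ^ 2 := by
    intro t ht
    have hsub' := hsub t ht
    have hmvt := (convex_uIcc 1 (1 + t)).norm_image_sub_le_of_norm_hasDerivWithin_le
      (C := L * |t|) (f := fun x => deriv g x - 2 * (x - 1))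
      (f' := fun x => deriv (deriv g) x - 2)
      (fun y hy => by
        have h2 : HasDerivAt (fun x : ℝ => 2 * (x - 1)) 2 y := by
          simpa using ((hasDerivAt_id y).sub_const 1).const_mul (2 : ℝ)
        exact (((hD1d y (hIcc (hsub' hy))).hasDerivAt).sub h2).hasDerivWithinAt)
      (fun y hy => by
        have h1 := step1 y (hsub' hy)
        have h2 := mul_le_mul_of_nonneg_left (key t y hy) hL
        simpa [Real.norm_eq_abs] using le_trans h1 h2)
      Set.left_mem_uIcc Set.right_mem_uIcc
    calc |deriv g (1 + t) - 2 * t| =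
        ‖(deriv g (1 + t) - 2 * ((1 + t) - 1)) - (deriv g 1 - 2 * (1 - 1))‖ := by
          rw [Real.norm_eq_abs, hg1]; ring_nf
      _ ≤ L * |t| * ‖(1 + t) - 1‖ := hmvt
      _ = L * t ^ 2 := by rw [Real.norm_eq_abs, show (1 + t) - 1 = t by ring, ← sq_abs]; ring
  refine ⟨L, r, hr, hL, hdom, ?_⟩
  intro t ht
  have hsub' := hsub t ht
  have hmvt := (convex_uIcc 1 (1 + t)).norm_image_sub_le_of_norm_hasDerivWithin_le
    (C := L * t ^ 2)
    (f := fun x => g x - (x - 1) ^ 2) (f' := fun x => deriv g x - 2 * (x - 1))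
    (fun y hy => by
      have h2 : HasDerivAt (fun x : ℝ => (x - 1) ^ 2) (2 * (y - 1)) y := by
        simpa [Pi.pow_def] using ((hasDerivAt_id y).sub_const 1).pow 2
      exact (((hgd y (hIcc (hsub' hy))).hasDerivAt).sub h2).hasDerivWithinAt)
    (fun y hy => by
      have hy1 : |y - 1| ≤ |t| := key t y hy
      have h1 := step2 (y - 1) (le_trans hy1 ht)
      rw [show 1 + (y - 1) = y by ring] at h1
      have h2 : (y - 1) ^ 2 ≤ t ^ 2 := by
        rw [← sq_abs (y - 1), ← sq_abs t]; exact pow_le_pow_left₀ (abs_nonneg _) hy1 2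
      have h3 := mul_le_mul_of_nonneg_left h2 hL
      simpa [Real.norm_eq_abs] using le_trans h1 h3)
    Set.left_mem_uIcc Set.right_mem_uIcc
  calc |g (1 + t) - t ^ 2| =
      ‖(g (1 + t) - ((1 + t) - 1) ^ 2) - (g 1 - (1 - 1) ^ 2)‖ := by
        rw [Real.norm_eq_abs, hg0]; ring_nf
    _ ≤ L * t ^ 2 * ‖(1 + t) - 1‖ := hmvt
    _ = L * |t| ^ 3 := by rw [Real.norm_eq_abs, show (1 + t) - 1 = t by ring, ← sq_abs]; ring

set_option maxHeartbeats 1000000 in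
theorem stmt4 (f : ℝ → EReal) (hf : IsDivergenceFn f) :
    ∃ c C : ℝ, 0 < c ∧ 0 ≤ C ∧
      ∀ ε : ℝ, 0 < ε → ε ≤ c →
        (∀ t : ℝ, -1 ≤ t →
          ((2 * (1 - C * ε) * huber ε t : ℝ) : EReal) ≤ f (1 + t)) ∧
        (∀ t : ℝ, |t| ≤ ε →
          f (1 + t) ≤ (((1 + C * ε) * t ^ 2 : ℝ) : EReal)) := by
  obtain ⟨g, δ, hδ, hfg, hg3, hg0, hg1, hg2⟩ := hf.smooth
  obtain ⟨L, r, hr, hL, hdom, hG⟩ := taylor_cubic hδ hg3 hg0 hg1 hg2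
  set C : ℝ := 20 * L + 20 with hC
  have hCpos : 0 < C := by positivity
  refine ⟨min (r / 2) (1 / C), C, lt_min (by positivity) (by positivity), hCpos.le, ?_⟩
  intro ε hε hεc
  have hεr : 2 * ε ≤ r := by
    have := le_trans hεc (min_le_left _ _); linarith
  have hεC : C * ε ≤ 1 := by
    have h1 := le_trans hεc (min_le_right _ _)
    rw [le_div_iff₀ hCpos] at h1; linarith
  -- f agrees with g near 1
  have hfg' : ∀ u : ℝ, |u| ≤ r → f (1 + u) = (g (1 + u) : EReal) := fun u hu =>
    hfg (1 + u) (hdom u hu)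
  constructor
  · -- lower bound
    intro t ht
    rcases le_or_gt |t| ε with hA | hA
    · -- |t| ≤ ε
      have htr : |t| ≤ r := by linarith
      rw [hfg' t htr, huber, if_pos hA, EReal.coe_le_coe_iff]
      have h1 := abs_le.mp (hG t htr)
      have h3 : |t| ^ 3 ≤ ε * t ^ 2 := by
        calc |t| ^ 3 = |t| * t ^ 2 := by rw [← sq_abs]; ring
          _ ≤ ε * t ^ 2 := mul_le_mul_of_nonneg_right hA (sq_nonneg t)
      have F2 := mul_le_mul_of_nonneg_left h3 hL
      have F5 : 0 ≤ (C - L) * ε * t ^ 2 := by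
        have : (0:ℝ) ≤ C - L := by rw [hC]; linarith
        positivity
      nlinarith [h1.1, F2, F5]
    · rcases le_or_gt |t| (2 * ε) with hB | hB
      · -- ε < |t| ≤ 2ε
        have htr : |t| ≤ r := le_trans hB hεr
        rw [hfg' t htr, huber, if_neg (not_le.mpr hA), EReal.coe_le_coe_iff]
        have h1 := abs_le.mp (hG t htr)
        have h3 : |t| ^ 3 ≤ 8 * ε ^ 3 := by
          calc |t| ^ 3 ≤ (2 * ε) ^ 3 := pow_le_pow_left₀ (abs_nonneg t) hB 3
            _ = 8 * ε ^ 3 := by ring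
        have h4 : t ^ 2 = |t| ^ 2 := (sq_abs t).symm
        have h5 : ε ^ 2 ≤ 2 * ε * |t| - ε ^ 2 := by nlinarith
        have F2 := mul_le_mul_of_nonneg_left h3 hL
        have F4 := mul_le_mul_of_nonneg_left h5 (mul_nonneg hCpos.le hε.le)
        have F5 : 8 * L * ε ^ 3 ≤ C * ε * ε ^ 2 := by
          rw [hC]
          nlinarith [mul_nonneg hL (pow_pos hε 3).le, pow_pos hε 3]
        nlinarith [h1.1, sq_nonneg (|t| - ε), F2, F4, F5]
      · -- |t| > 2ε : chord argument
        have hεr' : ε ≤ r := by linarith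
        have h2εr : |2 * ε| ≤ r := by rw [abs_of_pos (by linarith)]; exact hεr
        have hε1 : |ε| ≤ r := by rw [abs_of_pos hε]; exact hεr'
        have hεn : |(-ε : ℝ)| ≤ r := by rw [abs_neg]; exact hε1
        have h2εn : |(-(2 * ε) : ℝ)| ≤ r := by rw [abs_neg]; exact h2εr
        have hhub : (2 * (1 - C * ε) * huber ε t : ℝ) = (1 - C * ε) * (2 * ε * |t| - ε ^ 2) := by
          rw [huber, if_neg (not_le.mpr (by linarith))]; ring
        rcases lt_abs.mp hB with hpos | hneg
        · -- t > 2ε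
          set a : ℝ := ε / (t - ε) with ha_def
          set b : ℝ := (t - 2 * ε) / (t - ε) with hb_def
          have hte : (0:ℝ) < t - ε := by linarith
          have ha : 0 < a := by positivity
          have hb : 0 ≤ b := by
            apply div_nonneg (by linarith) hte.le
          have hab : a + b = 1 := by
            rw [ha_def, hb_def, ← add_div, div_eq_one_iff_eq hte.ne']; ring
          have hm' : a * (1 + t) + b * (1 + ε) = 1 + 2 * ε := by
            rw [ha_def, hb_def]; field_simp; ring
          have hchord := chord_aux hf.convex ha hb hab hm'
            (hfg' (2 * ε) h2εr) (hfg' ε hε1)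
          have heq : (g (1 + 2 * ε) - b * g (1 + ε)) / a
              = ((t - ε) * g (1 + 2 * ε) - (t - 2 * ε) * g (1 + ε)) / ε := by
            rw [ha_def, hb_def]; field_simp
          rw [heq] at hchord
          refine le_trans (EReal.coe_le_coe_iff.mpr ?_) hchord
          rw [hhub, abs_of_pos (by linarith : (0:ℝ) < t)]
          have hb1 : |g (1 + ε) - ε ^ 2| ≤ L * ε ^ 3 := by
            have := hG ε hε1; rwa [abs_of_pos hε] at this
          have hb2 : |g (1 + 2 * ε) - 4 * ε ^ 2| ≤ 8 * (L * ε ^ 3) := by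
            have := hG (2 * ε) h2εr
            rw [abs_of_pos (by linarith : (0:ℝ) < 2 * ε)] at this
            calc |g (1 + 2 * ε) - 4 * ε ^ 2| = |g (1 + 2 * ε) - (2 * ε) ^ 2| := by ring_nf
              _ ≤ L * (2 * ε) ^ 3 := this
              _ = 8 * (L * ε ^ 3) := by ring
          exact chord_arith hL hC hε hpos hb1 hb2
        · -- t < -2ε ; set s = -t
          set s : ℝ := -t with hs_def
          have hs : 2 * ε < s := hneg
          set a : ℝ := ε / (s - ε) with ha_def
          set b : ℝ := (s - 2 * ε) / (s - ε) with hb_def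
          have hte : (0:ℝ) < s - ε := by linarith
          have ha : 0 < a := by positivity
          have hb : 0 ≤ b := div_nonneg (by linarith) hte.le
          have hab : a + b = 1 := by
            rw [ha_def, hb_def, ← add_div, div_eq_one_iff_eq hte.ne']; ring
          have hm' : a * (1 + t) + b * (1 + -ε) = 1 + -(2 * ε) := by
            rw [ha_def, hb_def, show t = -s by rw [hs_def]; ring]
            field_simp; ring
          have hchord := chord_aux hf.convex ha hb hab hm'
            (hfg' (-(2 * ε)) h2εn) (hfg' (-ε) hεn)
          have heq : (g (1 + -(2 * ε)) - b * g (1 + -ε)) / a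
              = ((s - ε) * g (1 + -(2 * ε)) - (s - 2 * ε) * g (1 + -ε)) / ε := by
            rw [ha_def, hb_def]; field_simp
          rw [heq] at hchord
          refine le_trans (EReal.coe_le_coe_iff.mpr ?_) hchord
          rw [hhub, abs_of_neg (by linarith : t < 0), show -t = s from rfl]
          have hb1 : |g (1 + -ε) - ε ^ 2| ≤ L * ε ^ 3 := by
            have := hG (-ε) hεn
            rw [abs_neg, abs_of_pos hε] at this
            calc |g (1 + -ε) - ε ^ 2| = |g (1 + -ε) - (-ε) ^ 2| := by ring_nf
              _ ≤ L * ε ^ 3 := this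
          have hb2 : |g (1 + -(2 * ε)) - 4 * ε ^ 2| ≤ 8 * (L * ε ^ 3) := by
            have := hG (-(2 * ε)) h2εn
            rw [abs_neg, abs_of_pos (by linarith : (0:ℝ) < 2 * ε)] at this
            calc |g (1 + -(2 * ε)) - 4 * ε ^ 2| = |g (1 + -(2 * ε)) - (-(2 * ε)) ^ 2| := by
                  ring_nf
              _ ≤ L * (2 * ε) ^ 3 := this
              _ = 8 * (L * ε ^ 3) := by ring
          exact chord_arith hL hC hε hs hb1 hb2
  · -- upper bound
    intro t ht
    have htr : |t| ≤ r := by linarith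
    rw [hfg' t htr, EReal.coe_le_coe_iff]
    have h1 := abs_le.mp (hG t htr)
    have h3 : |t| ^ 3 ≤ ε * t ^ 2 := by
      calc |t| ^ 3 = |t| * t ^ 2 := by rw [← sq_abs]; ring
        _ ≤ ε * t ^ 2 := mul_le_mul_of_nonneg_right ht (sq_nonneg t)
    have F2 := mul_le_mul_of_nonneg_left h3 hL
    have F5 : 0 ≤ (C - L) * ε * t ^ 2 := by
      have : (0:ℝ) ≤ C - L := by rw [hC]; linarith
      positivity
    nlinarith [h1.2, F2, F5]
end
end

section
/- Let f satisfy Assumption A and ρ > 0. Let X ⊂ ℝ^d be a nonempty compact set, (S, Σ, P₀) a probability space, and ℓ : X × S → ℝ jointly measurable with x ↦ ℓ(x; s) continuous for every s ∈ S. Assume there is a measurable envelope Z̄ : S → ℝ₊ with |ℓ(x; s)| ≤ Z̄(s) for all x ∈ X and s ∈ S and E_{P₀}[Z̄^{1+ε}] < ∞ for some ε > 0. Let Z₁, Z₂, … be i.i.d. with law P₀ and assume the Glivenko–Cantelli property: sup_{x∈X} |(1/n)Σ_{i=1}^n ℓ(x; Z_i) − E_{P₀}[ℓ(x; Z)]|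 → 0 almost surely. Then sup_{x ∈ X} sup_{p ∈ Δ_{n,ρ}} | Σ_{i=1}^n p_i ℓ(x; Z_i) − E_{P₀}[ℓ(x; Z)] | → 0 almost surely as n → ∞. -/
open MeasureTheory ProbabilityTheory Filter Set

noncomputable section

open Topology

lemma ereal_coe_sum_s12 {ι : Type*} (s : Finset ι) (c : ι → ℝ) :
    ((∑ i ∈ s, c i : ℝ) : EReal) = ∑ i ∈ s, (c i : EReal) := by
  induction s using Finset.cons_induction with
  | empty => simp
  | cons i s hi ih => rw [Finset.sum_cons, Finset.sum_cons, EReal.coe_add, ih]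

lemma tangent_line {f : ℝ → EReal} {g : ℝ → ℝ} {I : Set ℝ} (hI : IsOpen I)
    (hconv : ∀ x y a b : ℝ, 0 ≤ a → 0 ≤ b → a + b = 1 →
      f (a * x + b * y) ≤ (a : EReal) * f x + (b : EReal) * f y)
    (hfg : ∀ t ∈ I, f t = (g t : EReal))
    {x : ℝ} (hx : x ∈ I) {d : ℝ} (hd : HasDerivAt g d x) (y : ℝ) :
    ((g x + d * (y - x) : ℝ) : EReal) ≤ f y := by
  set c : ℝ → ℝ := fun b => x + b * (y - x) with hc
  have hcont : Continuous c := by continuity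
  have hmem : ∀ᶠ b in 𝓝 (0:ℝ), c b ∈ I := by
    have h1 : Tendsto c (𝓝 0) (𝓝 (c 0)) := hcont.tendsto 0
    have h0 : c 0 = x := by simp [hc]
    rw [h0] at h1
    exact h1.eventually (hI.eventually_mem hx)
  have hkey : ∀ b : ℝ, 0 < b → b ≤ 1 → c b ∈ I →
      f (c b) ≤ ((1 - b : ℝ) : EReal) * f x + (b : EReal) * f y := by
    intro b hb hb1 hbI
    have h := hconv x y (1 - b) b (by linarith) hb.le (by ring)
    have he : (1 - b) * x + b * y = c b := by simp only [hc]; ring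
    rwa [he] at h
  by_cases htop : f y = ⊤
  · simp [htop]
  by_cases hbot : f y = ⊥
  · exfalso
    have hex : ∃ b : ℝ, 0 < b ∧ b ≤ 1 ∧ c b ∈ I := by
      have h2 : ∀ᶠ b in 𝓝[>] (0:ℝ), c b ∈ I := nhdsWithin_le_nhds hmem
      have h3 : ∀ᶠ b in 𝓝[>] (0:ℝ), b ∈ Ioo (0:ℝ) 1 :=
        Ioo_mem_nhdsGT_of_mem (by norm_num : (0:ℝ) ∈ Ico 0 1)
      rcases (h2.and h3).exists with ⟨b, hb⟩
      exact ⟨b, hb.2.1, hb.2.2.le, hb.1⟩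
    rcases hex with ⟨b, hb, hb1, hbI⟩
    have h := hkey b hb hb1 hbI
    rw [hbot, hfg _ hbI, hfg _ hx, EReal.coe_mul_bot_of_pos (by exact_mod_cast hb)] at h
    rw [show ((1 - b : ℝ) : EReal) * ((g x : ℝ) : EReal) = (((1-b) * g x : ℝ) : EReal) from
      (EReal.coe_mul _ _).symm, EReal.add_bot] at h
    exact (EReal.coe_ne_bot _) (le_bot_iff.mp h)
  obtain ⟨r, hy⟩ : ∃ r : ℝ, f y = (r : EReal) := by
    lift f y to ℝ using ⟨htop, hbot⟩ with r hr
    exact ⟨r, rfl⟩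
  rw [hy, EReal.coe_le_coe_iff]
  have hG : HasDerivAt (fun b => g (c b)) (d * (y - x)) 0 := by
    have hc' : HasDerivAt c (y - x) 0 := by
      simpa [hc] using ((hasDerivAt_id (0:ℝ)).mul_const (y - x)).const_add x
    have h0 : c 0 = x := by simp [hc]
    have hd' : HasDerivAt g d (c 0) := by rwa [h0]
    have h := hd'.comp 0 hc'
    exact h
  have hslope : Tendsto (fun b => (g (c b) - g x) / b) (𝓝[>] (0:ℝ)) (𝓝 (d * (y - x))) := by
    have h1 := hasDerivAt_iff_tendsto_slope.mp hG
    have h := h1.mono_left (nhdsWithin_mono 0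
      (fun b hb => ne_of_gt hb : Ioi (0:ℝ) ⊆ {0}ᶜ))
    apply h.congr'
    filter_upwards [self_mem_nhdsWithin] with b hb
    simp [slope, hc, div_eq_inv_mul]
  have hineq : ∀ᶠ b in 𝓝[>] (0:ℝ), (g (c b) - g x) / b ≤ r - g x := by
    have h2 : ∀ᶠ b in 𝓝[>] (0:ℝ), c b ∈ I := nhdsWithin_le_nhds hmem
    have h3 : ∀ᶠ b in 𝓝[>] (0:ℝ), b ∈ Ioo (0:ℝ) 1 :=
      Ioo_mem_nhdsGT_of_mem (by norm_num : (0:ℝ) ∈ Ico 0 1)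
    filter_upwards [h2, h3] with b hbI hb
    have h := hkey b hb.1 hb.2.le hbI
    rw [hy, hfg _ hbI, hfg _ hx, ← EReal.coe_mul, ← EReal.coe_mul, ← EReal.coe_add,
      EReal.coe_le_coe_iff] at h
    rw [div_le_iff₀ hb.1]
    nlinarith [hb.1]
  have := le_of_tendsto hslope hineq
  linarith

lemma huber_le_f {f : ℝ → EReal} (hf : IsDivergenceFn f) :
    ∃ δ : ℝ, 0 < δ ∧ δ ≤ 1 ∧ ∀ t : ℝ, ((huber δ (t - 1) / 4 : ℝ) : EReal) ≤ f t := by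
  obtain ⟨g, ε₀, hε₀, hfg, hg, hg1, hg'1, hg''1⟩ := hf.smooth
  set I : Set ℝ := Ioo (1 - ε₀) (1 + ε₀) with hIdef
  have hIopen : IsOpen I := isOpen_Ioo
  have h1I : (1:ℝ) ∈ I := by constructor <;> simp [hIdef] <;> linarith
  have hderiv : ∀ x ∈ I, HasDerivAt g (deriv g x) x := fun x hx =>
    (((hg x hx).contDiffAt (hIopen.mem_nhds hx)).differentiableAt
      (by norm_num)).hasDerivAt
  have hgd : ContDiffOn ℝ 2 (deriv g) I :=
    hg.deriv_of_isOpen hIopen (by norm_num)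
  have hd2 : HasDerivAt (deriv g) 2 1 := by
    have h := (((hgd 1 h1I).contDiffAt (hIopen.mem_nhds h1I)).differentiableAt
      (by norm_num)).hasDerivAt
    rwa [hg''1] at h
  have hev : ∀ᶠ t in 𝓝 (1:ℝ), t ∈ I ∧ |deriv g t - 2 * (t - 1)| ≤ |t - 1| := by
    have h1 : ∀ᶠ t in 𝓝 (1:ℝ), t ∈ I := hIopen.eventually_mem h1I
    have h2 := (hasDerivAt_iff_isLittleO.mp hd2).def one_pos
    have h3 : ∀ᶠ t in 𝓝 (1:ℝ), |deriv g t - 2 * (t - 1)| ≤ |t - 1| := by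
      filter_upwards [h2] with t ht
      have h4 : |deriv g t - (t - 1) * 2| ≤ |t - 1| := by
        simpa [hg'1, Real.norm_eq_abs] using ht
      have h5 : deriv g t - 2 * (t - 1) = deriv g t - (t - 1) * 2 := by ring
      rw [h5]
      exact h4
    exact h1.and h3
  rw [Metric.eventually_nhds_iff] at hev
  obtain ⟨δ₁, hδ₁, hball⟩ := hev
  set δ : ℝ := min (δ₁ / 2) 1 with hδdef
  have hδpos : 0 < δ := lt_min (by linarith) one_pos
  have hδ1 : δ ≤ 1 := min_le_right _ _
  have hmem : ∀ h : ℝ, |h| ≤ δ → (1 + h) ∈ I ∧ |deriv g (1 + h) - 2 * h| ≤ |h| := by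
    intro h hh
    have : dist (1 + h) 1 < δ₁ := by
      rw [Real.dist_eq]
      have : |1 + h - 1| = |h| := by ring_nf
      rw [this]
      calc |h| ≤ δ := hh
        _ ≤ δ₁ / 2 := min_le_left _ _
        _ < δ₁ := by linarith
    have hb := hball this
    refine ⟨hb.1, ?_⟩
    have e : (1:ℝ) + h - 1 = h := by ring
    rw [e] at hb
    exact hb.2
  have htan : ∀ x ∈ I, ∀ y : ℝ, ((g x + deriv g x * (y - x) : ℝ) : EReal) ≤ f y :=
    fun x hx y => tangent_line hIopen hf.convex hfg hx (hderiv x hx) y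
  have hf0 : ∀ y : ℝ, ((0:ℝ) : EReal) ≤ f y := by
    intro y
    have h := htan 1 h1I y
    rwa [hg1, hg'1, show (0:ℝ) + 0 * (y - 1) = 0 by ring] at h
  have hgnn : ∀ x ∈ I, 0 ≤ g x := by
    intro x hx
    have h := hf0 x
    rw [hfg x hx] at h
    exact_mod_cast h
  have hquad : ∀ u : ℝ, |u| ≤ δ → ((u ^ 2 / 4 : ℝ) : EReal) ≤ f (1 + u) := by
    intro u hu
    have hu2 : |u / 2| ≤ δ := by
      rw [abs_div, abs_two]
      linarith [abs_nonneg u, hu, hδpos]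
    obtain ⟨hxI, hd'⟩ := hmem (u/2) hu2
    have h := htan (1 + u/2) hxI (1 + u)
    have e : (1:ℝ) + u - (1 + u/2) = u/2 := by ring
    rw [e] at h
    refine le_trans (EReal.coe_le_coe_iff.mpr ?_) h
    have hgx := hgnn _ hxI
    rcases abs_cases (u/2) with ⟨he, _⟩ | ⟨he, _⟩ <;>
      rcases abs_le.mp hd' with ⟨ha, hb⟩ <;> nlinarith [sq_nonneg u]
  refine ⟨δ, hδpos, hδ1, fun t => ?_⟩
  set u : ℝ := t - 1 with hu
  have ht' : t = 1 + u := by ring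
  by_cases hc : |u| ≤ δ
  · rw [huber, if_pos hc, ht']
    refine le_trans (EReal.coe_le_coe_iff.mpr ?_) (hquad u hc)
    nlinarith [sq_nonneg u]
  · push_neg at hc
    rw [huber, if_neg (not_le.mpr hc)]
    have hδ2 : |δ/2| ≤ δ := by rw [abs_of_pos (by linarith)]; linarith
    rcases abs_cases u with ⟨he, hs⟩ | ⟨he, hs⟩
    · rw [he] at hc
      obtain ⟨hxI, hd'⟩ := hmem (δ/2) hδ2
      have hgx : δ^2/16 ≤ g (1 + δ/2) := by
        have h := hquad (δ/2) hδ2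
        rw [hfg _ hxI, EReal.coe_le_coe_iff] at h
        nlinarith
      have h := htan (1 + δ/2) hxI t
      refine le_trans (EReal.coe_le_coe_iff.mpr ?_) h
      rcases abs_le.mp hd' with ⟨ha, hb⟩
      rw [abs_of_pos (by linarith : (0:ℝ) < δ/2)] at ha hb
      have ht0 : t - (1 + δ/2) = u - δ/2 := by rw [hu]; ring
      rw [ht0]
      nlinarith [hc, hδpos]
    · rw [he] at hc
      have hδ2' : |(-(δ/2) : ℝ)| ≤ δ := by rw [abs_neg]; exact hδ2
      obtain ⟨hxI, hd'⟩ := hmem (-(δ/2)) hδ2'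
      have hgx : δ^2/16 ≤ g (1 + -(δ/2)) := by
        have h := hquad (-(δ/2)) hδ2'
        rw [hfg _ hxI, EReal.coe_le_coe_iff] at h
        nlinarith
      have h := htan (1 + -(δ/2)) hxI t
      refine le_trans (EReal.coe_le_coe_iff.mpr ?_) h
      rcases abs_le.mp hd' with ⟨ha, hb⟩
      rw [abs_neg, abs_of_pos (by linarith : (0:ℝ) < δ/2)] at ha hb
      have ht0 : t - (1 + -(δ/2)) = u + δ/2 := by rw [hu]; ring
      rw [ht0]
      nlinarith [hc, hδpos]

lemma huber_nonneg {δ t : ℝ} (hδ : 0 < δ) : 0 ≤ huber δ t := by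
  rw [huber]
  split_ifs with h
  · positivity
  · push_neg at h
    nlinarith [abs_nonneg t]

lemma det_bound {n : ℕ} {δ ρ : ℝ} (hδ : 0 < δ) (hρ : 0 < ρ)
    (u z w : Fin n → ℝ) (M : ℝ) (hM0 : 0 ≤ M)
    (hz : ∀ i, |z i| ≤ w i) (hwM : ∀ i, w i ≤ M)
    (hw2 : ∑ i, w i ^ 2 ≤ M ^ 2)
    (hu : ∑ i, huber δ (u i) ≤ 4 * ρ) :
    |∑ i, u i * z i| ≤ (Real.sqrt (8 * ρ) + 8 * ρ / δ) * M := by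
  have hw0 : ∀ i, 0 ≤ w i := fun i => (abs_nonneg _).trans (hz i)
  have habs : |∑ i, u i * z i| ≤ ∑ i, |u i| * w i := by
    refine (Finset.abs_sum_le_sum_abs _ _).trans (Finset.sum_le_sum fun i _ => ?_)
    rw [abs_mul]
    exact mul_le_mul_of_nonneg_left (hz i) (abs_nonneg _)
  set s : Finset (Fin n) := Finset.univ.filter (fun i => |u i| ≤ δ) with hs
  have hsplit : ∑ i, |u i| * w i =
      ∑ i ∈ s, |u i| * w i + ∑ i ∈ Finset.univ.filter (fun i => ¬ |u i| ≤ δ), |u i| * w i :=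
    (Finset.sum_filter_add_sum_filter_not _ _ _).symm
  have hsmall : ∑ i ∈ s, |u i| * w i ≤ Real.sqrt (8 * ρ) * M := by
    have hcs := Finset.sum_mul_sq_le_sq_mul_sq s (fun i => |u i|) w
    have hu2 : ∑ i ∈ s, |u i| ^ 2 ≤ 8 * ρ := by
      have e : ∀ i ∈ s, |u i| ^ 2 = 2 * huber δ (u i) := by
        intro i hi
        rw [hs, Finset.mem_filter] at hi
        rw [huber, if_pos hi.2, sq_abs]
        ring
      rw [Finset.sum_congr rfl e]
      have : ∑ i ∈ s, huber δ (u i) ≤ ∑ i, huber δ (u i) :=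
        Finset.sum_le_sum_of_subset_of_nonneg (Finset.subset_univ s)
          (fun i _ _ => huber_nonneg hδ)
      rw [← Finset.mul_sum]
      linarith
    have hw2' : ∑ i ∈ s, w i ^ 2 ≤ M ^ 2 := by
      refine le_trans (Finset.sum_le_sum_of_subset_of_nonneg (Finset.subset_univ s)
        (fun i _ _ => sq_nonneg _)) hw2
    have hnn : 0 ≤ ∑ i ∈ s, |u i| * w i :=
      Finset.sum_nonneg fun i _ => mul_nonneg (abs_nonneg _) (hw0 i)
    have hsq : (∑ i ∈ s, |u i| * w i) ^ 2 ≤ (8 * ρ) * M ^ 2 := by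
      refine hcs.trans ?_
      have h1 : (0:ℝ) ≤ ∑ i ∈ s, w i ^ 2 := Finset.sum_nonneg fun i _ => sq_nonneg _
      have h2 : (0:ℝ) ≤ ∑ i ∈ s, |u i| ^ 2 := Finset.sum_nonneg fun i _ => sq_nonneg _
      nlinarith
    have := Real.sqrt_le_sqrt hsq
    rwa [Real.sqrt_sq hnn, Real.sqrt_mul (by positivity) (M^2), Real.sqrt_sq hM0] at this
  have hlarge : ∑ i ∈ Finset.univ.filter (fun i => ¬ |u i| ≤ δ), |u i| * w i
      ≤ 8 * ρ / δ * M := by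
    have h1 : ∀ i ∈ Finset.univ.filter (fun i => ¬ |u i| ≤ δ),
        |u i| * w i ≤ (2 / δ * huber δ (u i)) * M := by
      intro i hi
      rw [Finset.mem_filter] at hi
      have hgt : δ < |u i| := not_le.mp hi.2
      have hhub : |u i| ≤ 2 / δ * huber δ (u i) := by
        rw [huber, if_neg hi.2]
        rw [div_mul_eq_mul_div, le_div_iff₀ hδ]
        nlinarith
      calc |u i| * w i ≤ |u i| * M := mul_le_mul_of_nonneg_left (hwM i) (abs_nonneg _)
        _ ≤ (2 / δ * huber δ (u i)) * M :=
            mul_le_mul_of_nonneg_right hhub hM0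
    refine (Finset.sum_le_sum h1).trans ?_
    rw [← Finset.sum_mul]
    have h2 : ∑ i ∈ Finset.univ.filter (fun i => ¬ |u i| ≤ δ), 2 / δ * huber δ (u i)
        ≤ 2 / δ * (4 * ρ) := by
      rw [← Finset.mul_sum]
      refine mul_le_mul_of_nonneg_left ?_ (by positivity)
      refine le_trans (Finset.sum_le_sum_of_subset_of_nonneg (Finset.subset_univ _)
        (fun i _ _ => huber_nonneg hδ)) hu
    have h3 : 2 / δ * (4 * ρ) = 8 * ρ / δ := by field_simp; ring
    rw [h3] at h2
    exact mul_le_mul_of_nonneg_right h2 hM0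
  rw [add_mul]
  linarith

lemma aux_tendsto {Ω : Type*} [MeasurableSpace Ω] (μ : Measure Ω) [IsProbabilityMeasure μ]
    (Y : ℕ → Ω → ℝ) (hYnn : ∀ i ω, 0 ≤ Y i ω) (hint : Integrable (Y 0) μ)
    (hindep : Pairwise (Function.onFun (IndepFun · · μ) Y)) (hident : ∀ i, IdentDistrib (Y i) (Y 0) μ μ)
    (q : ℝ) (hq : 0 < q) (hq1 : q < 1) :
    ∀ᵐ ω ∂μ, Tendsto (fun n : ℕ => (∑ i ∈ Finset.range n, Y i ω) ^ q / n) atTop (𝓝 0) := by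
  filter_upwards [strong_law_ae Y hint hindep hident] with ω hω
  set A : ℕ → ℝ := fun n => ∑ i ∈ Finset.range n, Y i ω with hA
  have hAnn : ∀ n, 0 ≤ A n := fun n => Finset.sum_nonneg fun i _ => hYnn i ω
  have hω' : Tendsto (fun n : ℕ => A n / n) atTop (𝓝 (μ[Y 0])) := by
    refine hω.congr fun n => ?_
    simp [hA, smul_eq_mul, div_eq_inv_mul]
  have h1 : Tendsto (fun n : ℕ => (A n / n) ^ q) atTop (𝓝 ((μ[Y 0]) ^ q)) :=
    ((Real.continuousAt_rpow_const _ q (Or.inr hq.le)).tendsto.comp hω')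
  have h2 : Tendsto (fun n : ℕ => ((n : ℝ)) ^ (1 - q)) atTop atTop :=
    (tendsto_rpow_atTop (by linarith)).comp tendsto_natCast_atTop_atTop
  have h3 : Tendsto (fun n : ℕ => (A n / n) ^ q / ((n:ℝ)) ^ (1 - q)) atTop (𝓝 0) :=
    Tendsto.div_atTop h1 h2
  refine h3.congr' ?_
  filter_upwards [eventually_ge_atTop 1] with n hn
  have hnpos : (0:ℝ) < (n:ℝ) := by exact_mod_cast hn
  rw [Real.div_rpow (hAnn n) hnpos.le, div_div, ← Real.rpow_add hnpos]
  norm_num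
  rfl

theorem stmt12 {S : Type*} [MeasurableSpace S] (P₀ : Measure S) [IsProbabilityMeasure P₀]
    {Ω : Type*} [MeasurableSpace Ω] (μ : Measure Ω) [IsProbabilityMeasure μ]
    (f : ℝ → EReal) (hf : IsDivergenceFn f) (ρ : ℝ) (hρ : 0 < ρ)
    (d : ℕ) (X : Set (Fin d → ℝ)) (hXne : X.Nonempty) (hXc : IsCompact X)
    (ℓ : (Fin d → ℝ) → S → ℝ)
    (hmeas : Measurable fun q : (Fin d → ℝ) × S => ℓ q.1 q.2)
    (hcont : ∀ s : S, ContinuousOn (fun x => ℓ x s) X)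
    (Zbar : S → ℝ) (hZbarMeas : Measurable Zbar) (hZbarNN : ∀ s, 0 ≤ Zbar s)
    (henv : ∀ x ∈ X, ∀ s : S, |ℓ x s| ≤ Zbar s)
    (ε : ℝ) (hε : 0 < ε) (hmom : Integrable (fun s => Zbar s ^ (1 + ε)) P₀)
    (Z : ℕ → Ω → S) (hZ : ∀ i, Measurable (Z i))
    (hindep : iIndepFun Z μ)
    (hlaw : ∀ i, Measure.map (Z i) μ = P₀)
    (hGC : ∀ᵐ ω ∂μ, Tendsto (fun n : ℕ =>
        sSup ((fun x : Fin d → ℝ =>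
          |(∑ i ∈ Finset.range n, ℓ x (Z i ω)) / n - ∫ s, ℓ x s ∂P₀|) '' X))
      atTop (nhds 0)) :
    ∀ᵐ ω ∂μ, Tendsto (fun n : ℕ =>
        sSup {r : ℝ | ∃ x ∈ X, ∃ p ∈ simplexBall f n ρ,
          r = |(∑ i : Fin n, p i * ℓ x (Z i.1 ω)) - ∫ s, ℓ x s ∂P₀|})
      atTop (nhds 0) := by
  -- reduced exponent
  set ε' : ℝ := min ε 1 with hε'def
  have hε'pos : 0 < ε' := lt_min hε one_pos
  have hε'le1 : ε' ≤ 1 := min_le_right _ _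
  have hε'leε : ε' ≤ ε := min_le_left _ _
  set q : ℝ := 1 / (1 + ε') with hqdef
  have h1ε' : (0:ℝ) < 1 + ε' := by linarith
  have hqpos : 0 < q := by positivity
  have hq1 : q < 1 := by
    rw [hqdef, div_lt_one h1ε']
    linarith
  have hqe : (1 + ε') * q = 1 := by
    rw [hqdef]
    field_simp
  -- the envelope power function
  set φ : S → ℝ := fun s => Zbar s ^ (1 + ε') with hφdef
  have hφcont : Continuous (fun x : ℝ => x ^ (1 + ε')) :=
    continuous_iff_continuousAt.mpr fun x =>
      Real.continuousAt_rpow_const x _ (Or.inr (by linarith))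
  have hφm : Measurable φ := (hφcont.measurable).comp hZbarMeas
  -- bounds by the (1+ε)-moment
  have hpow_bound : ∀ c : ℝ, 1 ≤ c → c ≤ 1 + ε → ∀ s,
      Zbar s ^ c ≤ 1 + Zbar s ^ (1 + ε) := by
    intro c hc1 hc2 s
    rcases le_or_gt (Zbar s) 1 with h | h
    · have h1 : Zbar s ^ c ≤ 1 := Real.rpow_le_one (hZbarNN s) h (by linarith)
      have h2 : (0:ℝ) ≤ Zbar s ^ (1 + ε) := Real.rpow_nonneg (hZbarNN s) _
      linarith
    · have h1 : Zbar s ^ c ≤ Zbar s ^ (1 + ε) :=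
        Real.rpow_le_rpow_of_exponent_le h.le hc2
      linarith
  have hZint : Integrable Zbar P₀ := by
    refine Integrable.mono' ((integrable_const (1:ℝ)).add hmom)
      hZbarMeas.aestronglyMeasurable (ae_of_all _ fun s => ?_)
    rw [Real.norm_eq_abs, abs_of_nonneg (hZbarNN s)]
    have := hpow_bound 1 le_rfl (by linarith) s
    rwa [Real.rpow_one] at this
  have hφint : Integrable φ P₀ := by
    refine Integrable.mono' ((integrable_const (1:ℝ)).add hmom)
      hφm.aestronglyMeasurable (ae_of_all _ fun s => ?_)
    rw [Real.norm_eq_abs, abs_of_nonneg (Real.rpow_nonneg (hZbarNN s) _)]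
    exact hpow_bound (1 + ε') (by linarith) (by linarith) s
  -- the i.i.d. sequence Y
  set Y : ℕ → Ω → ℝ := fun i ω => φ (Z i ω) with hYdef
  have hYnn : ∀ i ω, 0 ≤ Y i ω := fun i ω => Real.rpow_nonneg (hZbarNN _) _
  have hYint : Integrable (Y 0) μ := by
    have h := (integrable_map_measure hφm.aestronglyMeasurable (hZ 0).aemeasurable).mp
      (by rw [hlaw 0]; exact hφint)
    exact h
  have hYindep : Pairwise (Function.onFun (IndepFun · · μ) Y) := by
    intro i j hij
    exact (hindep.indepFun hij).comp hφm hφm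
  have hYident : ∀ i, IdentDistrib (Y i) (Y 0) μ μ := by
    intro i
    have hz : IdentDistrib (Z i) (Z 0) μ μ :=
      ⟨(hZ i).aemeasurable, (hZ 0).aemeasurable, by rw [hlaw i, hlaw 0]⟩
    exact hz.comp hφm
  have hMn := aux_tendsto μ Y hYnn hYint hYindep hYident q hqpos hq1
  -- the Huber lower bound for f
  obtain ⟨δ, hδpos, hδ1, hhub⟩ := huber_le_f hf
  set C : ℝ := Real.sqrt (8 * ρ) + 8 * ρ / δ with hCdef
  have hC0 : 0 ≤ C := by positivity
  -- integral bounds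
  have hℓmeas : ∀ x : Fin d → ℝ, Measurable (fun s => ℓ x s) := fun x =>
    hmeas.comp (measurable_const.prodMk measurable_id)
  have hℓint : ∀ x ∈ X, Integrable (fun s => ℓ x s) P₀ := by
    intro x hx
    refine Integrable.mono' hZint (hℓmeas x).aestronglyMeasurable
      (ae_of_all _ fun s => ?_)
    rw [Real.norm_eq_abs]
    exact henv x hx s
  have hIB : ∀ x ∈ X, |∫ s, ℓ x s ∂P₀| ≤ ∫ s, Zbar s ∂P₀ := by
    intro x hx
    calc |∫ s, ℓ x s ∂P₀| ≤ ∫ s, |ℓ x s| ∂P₀ := by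
          simpa [Real.norm_eq_abs] using
            norm_integral_le_integral_norm (μ := P₀) (fun s => ℓ x s)
      _ ≤ ∫ s, Zbar s ∂P₀ :=
          integral_mono (hℓint x hx).abs hZint (fun s => henv x hx s)
  -- main argument, a.e. ω
  filter_upwards [hGC, hMn] with ω hGCω hMω
  set G : ℕ → ℝ := fun n =>
    sSup ((fun x : Fin d → ℝ =>
      |(∑ i ∈ Finset.range n, ℓ x (Z i ω)) / n - ∫ s, ℓ x s ∂P₀|) '' X) with hGdef
  set A : ℕ → ℝ := fun n => ∑ i ∈ Finset.range n, Y i ω with hAdef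
  have hAnn : ∀ n, 0 ≤ A n := fun n => Finset.sum_nonneg fun i _ => hYnn i ω
  set M : ℕ → ℝ := fun n => A n ^ q with hMdef
  have hMnn : ∀ n, 0 ≤ M n := fun n => Real.rpow_nonneg (hAnn n) q
  have hGnn : ∀ n, 0 ≤ G n :=
    fun n => Real.sSup_nonneg fun r ⟨x, hx, hr⟩ => hr ▸ abs_nonneg _
  -- limit of the bounding sequence
  have hlim : Tendsto (fun n : ℕ => G n + C * (M n / n)) atTop (𝓝 0) := by
    have h := hGCω.add ((hMω.const_mul C))
    simpa using h
  refine tendsto_of_tendsto_of_tendsto_of_le_of_le' tendsto_const_nhds hlim ?_ ?_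
  · -- lower bound 0
    filter_upwards with n
    exact Real.sSup_nonneg fun r hr => by
      obtain ⟨x, hx, p, hp, rfl⟩ := hr
      exact abs_nonneg _
  · -- upper bound
    filter_upwards [eventually_ge_atTop 1] with n hn1
    have hnpos : (0:ℝ) < (n:ℝ) := by exact_mod_cast hn1
    have hnne : ((n:ℝ)) ≠ 0 := ne_of_gt hnpos
    -- bounded above of the GC image set
    have hGbdd : BddAbove ((fun x : Fin d → ℝ =>
        |(∑ i ∈ Finset.range n, ℓ x (Z i ω)) / n - ∫ s, ℓ x s ∂P₀|) '' X) := by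
      refine ⟨(∑ i ∈ Finset.range n, Zbar (Z i ω)) / n + ∫ s, Zbar s ∂P₀, ?_⟩
      rintro v ⟨x, hx, rfl⟩
      have h1 : |(∑ i ∈ Finset.range n, ℓ x (Z i ω))| ≤
          ∑ i ∈ Finset.range n, Zbar (Z i ω) :=
        (Finset.abs_sum_le_sum_abs _ _).trans (Finset.sum_le_sum fun i _ => henv x hx _)
      have h2 := hIB x hx
      calc |(∑ i ∈ Finset.range n, ℓ x (Z i ω)) / n - ∫ s, ℓ x s ∂P₀|
          ≤ |(∑ i ∈ Finset.range n, ℓ x (Z i ω)) / n| + |∫ s, ℓ x s ∂P₀| := abs_sub _ _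
        _ ≤ (∑ i ∈ Finset.range n, Zbar (Z i ω)) / n + ∫ s, Zbar s ∂P₀ := by
            rw [abs_div, abs_of_nonneg hnpos.le]
            gcongr
    refine Real.sSup_le ?_ (add_nonneg (hGnn n)
      (mul_nonneg hC0 (div_nonneg (hMnn n) hnpos.le)))
    rintro r ⟨x, hx, p, hp, rfl⟩
    obtain ⟨hp1, hp2, hp3⟩ := hp
    set z : Fin n → ℝ := fun i => ℓ x (Z i.1 ω) with hzdef
    set w : Fin n → ℝ := fun i => Zbar (Z i.1 ω) with hwdef
    set u : Fin n → ℝ := fun i => (n:ℝ) * p i - 1 with hudef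
    -- huber sum bound
    have hub : ∑ i, huber δ (u i) ≤ 4 * ρ := by
      have h1 : ∑ i : Fin n, ((huber δ ((n:ℝ) * p i - 1) / 4 : ℝ) : EReal)
          ≤ ∑ i, f ((n:ℝ) * p i) :=
        Finset.sum_le_sum fun i _ => hhub _
      rw [← ereal_coe_sum_s12] at h1
      have h2 := EReal.coe_le_coe_iff.mp (le_trans h1 hp3)
      have h3 : ∑ i : Fin n, huber δ ((n:ℝ) * p i - 1) / 4
          = (∑ i : Fin n, huber δ (u i)) / 4 := by
        rw [Finset.sum_div]
      rw [h3] at h2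
      linarith
    -- envelope facts
    have hAfin : ∑ i : Fin n, w i ^ (1 + ε') = A n := by
      rw [hAdef]
      exact Fin.sum_univ_eq_sum_range (fun k => Zbar (Z k ω) ^ (1 + ε')) n
    have hwMn : ∀ i : Fin n, w i ≤ M n := by
      intro i
      have h0 : 0 ≤ w i := hZbarNN _
      have h1 : w i ^ (1 + ε') ≤ A n := by
        rw [← hAfin]
        exact Finset.single_le_sum (f := fun j : Fin n => w j ^ (1 + ε'))
          (fun j _ => Real.rpow_nonneg (hZbarNN _) _) (Finset.mem_univ i)
      have h2 : (w i ^ (1 + ε')) ^ q ≤ A n ^ q :=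
        Real.rpow_le_rpow (Real.rpow_nonneg h0 _) h1 hqpos.le
      rw [← Real.rpow_mul h0, hqe, Real.rpow_one] at h2
      rw [hMdef]
      exact h2
    have hsum2 : (1 + ε') + (1 - ε') = ((2:ℕ):ℝ) := by push_cast; ring
    have hAM : (A n ^ q) ^ (1 + ε') = A n := by
      rw [← Real.rpow_mul (hAnn n), mul_comm q, hqe, Real.rpow_one]
    have hw2 : ∑ i : Fin n, w i ^ 2 ≤ M n ^ 2 := by
      have hstep : ∀ i : Fin n, w i ^ 2 ≤ w i ^ (1 + ε') * M n ^ (1 - ε') := by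
        intro i
        have h0 : 0 ≤ w i := hZbarNN _
        have e1 : w i ^ (2:ℕ) = w i ^ (1 + ε') * w i ^ (1 - ε') := by
          rw [← Real.rpow_natCast (w i) 2, ← hsum2,
            Real.rpow_add' h0 (by rw [show (1+ε')+(1-ε') = 2 by ring]; norm_num)]
        rw [e1]
        exact mul_le_mul_of_nonneg_left
          (Real.rpow_le_rpow h0 (hwMn i) (by linarith)) (Real.rpow_nonneg h0 _)
      calc ∑ i : Fin n, w i ^ 2
          ≤ ∑ i : Fin n, w i ^ (1 + ε') * M n ^ (1 - ε') :=
            Finset.sum_le_sum fun i _ => hstep i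
        _ = A n * M n ^ (1 - ε') := by rw [← Finset.sum_mul, hAfin]
        _ = M n ^ (1 + ε') * M n ^ (1 - ε') := by rw [hMdef, hAM]
        _ = M n ^ (2:ℕ) := by
            rw [← Real.rpow_add' (hMnn n) (by rw [show (1+ε')+(1-ε') = 2 by ring]; norm_num),
              hsum2, Real.rpow_natCast]
    have hz_le : ∀ i, |z i| ≤ w i := fun i => henv x hx _
    have hdet := det_bound hδpos hρ u z w (M n) (hMnn n) hz_le hwMn hw2 hub
    -- algebra
    have key1 : ∑ i : Fin n, u i * z i = (n:ℝ) * (∑ i, p i * z i) - ∑ i, z i := by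
      rw [Finset.mul_sum, ← Finset.sum_sub_distrib]
      exact Finset.sum_congr rfl fun i _ => by simp only [hudef]; ring
    have e2 : (∑ i : Fin n, p i * z i) - (∑ i : Fin n, z i) / n
        = (∑ i : Fin n, u i * z i) / n := by
      rw [key1]
      field_simp
    have hdecomp : |(∑ i : Fin n, p i * z i) - ∫ s, ℓ x s ∂P₀| ≤
        |(∑ i : Fin n, u i * z i) / n|
          + |(∑ i : Fin n, z i) / n - ∫ s, ℓ x s ∂P₀| := by
      have e3 : (∑ i : Fin n, p i * z i) - ∫ s, ℓ x s ∂P₀ =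
          ((∑ i : Fin n, u i * z i) / n)
            + ((∑ i : Fin n, z i) / n - ∫ s, ℓ x s ∂P₀) := by
        rw [← e2]
        ring
      rw [e3]
      exact abs_add_le _ _
    have ht1 : |(∑ i : Fin n, u i * z i) / n| ≤ C * (M n / n) := by
      rw [abs_div, abs_of_nonneg hnpos.le]
      calc |∑ i : Fin n, u i * z i| / n ≤ (C * M n) / n := by gcongr
        _ = C * (M n / n) := mul_div_assoc _ _ _
    have hfin : ∑ i : Fin n, z i = ∑ i ∈ Finset.range n, ℓ x (Z i ω) := by
      simp only [hzdef]
      exact Fin.sum_univ_eq_sum_range (fun k => ℓ x (Z k ω)) n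
    have ht2 : |(∑ i : Fin n, z i) / n - ∫ s, ℓ x s ∂P₀| ≤ G n := by
      rw [hfin, hGdef]
      exact le_csSup hGbdd ⟨x, hx, rfl⟩
    have hgoal : |(∑ i : Fin n, p i * z i) - ∫ s, ℓ x s ∂P₀| ≤ G n + C * (M n / n) := by
      linarith
    exact hgoal
end
end

section
/- Fix k ∈ (1, ∞) and let k* := k/(k−1). Define the Cressie–Read function f_k(t) := (t^k − k t + k − 1) / (2k(k−1)) for t ≥ 0 and f_k(t) := +∞ for t < 0. Then for every n ∈ ℕ, every ρ > 0, and every ℓ ∈ ℝⁿ, sup { Σ_{i=1}^n p_i ℓ_i : p ∈ ℝⁿ, p ≥ 0, Σ_i p_i = 1, Σ_{i=1}^n f_k(n p_i) ≤ ρ } = inf_{η ∈ ℝ} { (1 + 2k(k−1)ρ/n)^{1/k} · ( (1/n) Σ_{i=1}^n (max(ℓ_i − η, 0))^{k*} )^{1/k*} + η }. -/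
open MeasureTheory ProbabilityTheory Filter Set

noncomputable section

set_option maxHeartbeats 1000000


lemma max_rpow_pred_mul (q t : ℝ) (hq : 1 < q) : (max t 0)^(q-1) * t = (max t 0)^q := by
  have hq0 : q ≠ 0 := by linarith
  rcases le_or_gt t 0 with h | h
  · rcases eq_or_lt_of_le h with rfl | h'
    · simp [Real.zero_rpow hq0]
    · rw [max_eq_right h]
      rw [Real.zero_rpow (by linarith : q - 1 ≠ 0), Real.zero_rpow hq0, zero_mul]
  · rw [max_eq_left h.le]
    rw [← Real.rpow_add_one' h.le (by simpa using hq0)]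
    ring_nf

lemma cont_sum_maxpow {n : ℕ} (e : ℝ) (he : 0 ≤ e) (ℓ : Fin n → ℝ) :
    Continuous fun η => ∑ i, max (ℓ i - η) 0 ^ e := by
  apply continuous_finset_sum
  intro i _
  exact ((continuous_const.sub continuous_id).max continuous_const).rpow_const
    (fun x => Or.inr he)

lemma holder_bound (k q : ℝ) (hconj : Real.HolderConjugate k q)
    (n : ℕ) (hn : 0 < n) (ρ : ℝ) (hρ : 0 ≤ ρ) (ℓ p : Fin n → ℝ)
    (hp0 : ∀ i, 0 ≤ p i) (hp1 : ∑ i, p i = 1)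
    (hpc : ∑ i, (((n : ℝ) * p i) ^ k - k * ((n : ℝ) * p i) + k - 1) / (2 * k * (k - 1)) ≤ ρ)
    (η : ℝ) :
    ∑ i, p i * ℓ i ≤ (1 + 2 * k * (k - 1) * ρ / n) ^ (1 / k) *
      ((1 / n) * ∑ i, (max (ℓ i - η) 0) ^ q) ^ (1 / q) + η := by
  have hk := hconj.lt
  have hn' : (0:ℝ) < n := by exact_mod_cast hn
  have hC : (0:ℝ) < 2 * k * (k - 1) := by nlinarith
  have hA : (0:ℝ) < 1 + 2 * k * (k - 1) * ρ / n := by positivity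
  set A := 1 + 2 * k * (k - 1) * ρ / n with hAdef
  set Sr := ∑ i, (max (ℓ i - η) 0) ^ q with hSr
  have hSr0 : 0 ≤ Sr := Finset.sum_nonneg fun i _ => Real.rpow_nonneg (le_max_right _ _) _
  have hsum_np : ∑ i, (n : ℝ) * p i = n := by
    rw [← Finset.mul_sum, hp1, mul_one]
  have hkey : ∑ i, ((n : ℝ) * p i) ^ k ≤ n * A := by
    have h1 : ∑ i, (((n : ℝ) * p i) ^ k - k * ((n : ℝ) * p i) + k - 1) ≤ 2 * k * (k-1) * ρ := by
      rw [← Finset.sum_div] at hpc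
      calc ∑ i, (((n : ℝ) * p i) ^ k - k * ((n : ℝ) * p i) + k - 1)
          = (∑ i, (((n : ℝ) * p i) ^ k - k * ((n : ℝ) * p i) + k - 1)) / (2*k*(k-1)) * (2*k*(k-1)) := by
            rw [div_mul_cancel₀ _ hC.ne']
        _ ≤ ρ * (2*k*(k-1)) := by
            exact mul_le_mul_of_nonneg_right hpc hC.le
        _ = 2*k*(k-1)*ρ := by ring
    have h2 : ∑ i, (((n : ℝ) * p i) ^ k - k * ((n : ℝ) * p i) + k - 1)
        = (∑ i, ((n : ℝ) * p i) ^ k) - k * n + (k-1) * n := by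
      simp only [Finset.sum_sub_distrib, Finset.sum_add_distrib, ← Finset.mul_sum, hsum_np,
        Finset.sum_const, Finset.card_univ, Fintype.card_fin, nsmul_eq_mul]
      ring
    have : n * A = n + 2*k*(k-1)*ρ := by
      rw [hAdef, mul_add, mul_one, mul_div_assoc', mul_div_cancel_left₀ _ hn'.ne']
    rw [this]
    nlinarith [h1, h2]
  have step1 : ∑ i, p i * ℓ i ≤ ∑ i, p i * max (ℓ i - η) 0 + η := by
    have e : ∑ i, p i * ℓ i = ∑ i, p i * (ℓ i - η) + η := by
      rw [show ∑ i, p i * (ℓ i - η) = ∑ i, p i * ℓ i - η * ∑ i, p i by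
        rw [Finset.mul_sum, ← Finset.sum_sub_distrib]; apply Finset.sum_congr rfl; intros; ring]
      rw [hp1]; ring
    rw [e]
    have h := Finset.sum_le_sum (fun i (_ : i ∈ Finset.univ) =>
      mul_le_mul_of_nonneg_left (le_max_left (ℓ i - η) 0) (hp0 i))
    linarith
  have hold := Real.inner_le_Lp_mul_Lq_of_nonneg Finset.univ hconj
    (f := fun i => (n : ℝ) * p i) (g := fun i => max (ℓ i - η) 0)
    (fun i _ => mul_nonneg hn'.le (hp0 i)) (fun i _ => le_max_right _ _)
  have step2 : ∑ i, p i * max (ℓ i - η) 0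
      ≤ (1/(n:ℝ)) * ((n * A) ^ (1/k) * Sr ^ (1/q)) := by
    have e : ∑ i, p i * max (ℓ i - η) 0 = (1/(n:ℝ)) * ∑ i, ((n:ℝ) * p i) * max (ℓ i - η) 0 := by
      rw [Finset.mul_sum]; apply Finset.sum_congr rfl; intro i _; field_simp
    rw [e]
    have h3 : (∑ i, ((n:ℝ) * p i) ^ k) ^ (1/k) ≤ ((n:ℝ) * A) ^ (1/k) :=
      Real.rpow_le_rpow (Finset.sum_nonneg fun i _ =>
        Real.rpow_nonneg (mul_nonneg hn'.le (hp0 i)) _) hkey (by positivity)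
    apply mul_le_mul_of_nonneg_left _ (by positivity)
    calc ∑ i, ((n:ℝ) * p i) * max (ℓ i - η) 0
        ≤ (∑ i, ((n:ℝ) * p i) ^ k) ^ (1/k) * Sr ^ (1/q) := hold
      _ ≤ ((n:ℝ) * A) ^ (1/k) * Sr ^ (1/q) :=
          mul_le_mul_of_nonneg_right h3 (Real.rpow_nonneg hSr0 _)
  have alg : (1/(n:ℝ)) * ((n * A) ^ (1/k) * Sr ^ (1/q)) = A ^ (1/k) * ((1/n) * Sr) ^ (1/q) := by
    rw [Real.mul_rpow hn'.le hA.le, Real.mul_rpow (by positivity) hSr0]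
    have e1 : ((1:ℝ)/n) ^ (1/q) = (n:ℝ) ^ (1/k) / n := by
      rw [one_div, ← Real.rpow_neg_one (n:ℝ), ← Real.rpow_mul hn'.le]
      rw [show (-1) * (1/q) = 1/k - 1 by
        have := hconj.inv_add_inv_eq_one
        rw [inv_eq_one_div, inv_eq_one_div] at this
        linarith]
      rw [Real.rpow_sub hn', Real.rpow_one]
    rw [e1]
    field_simp
  calc ∑ i, p i * ℓ i ≤ ∑ i, p i * max (ℓ i - η) 0 + η := step1
    _ ≤ (1/(n:ℝ)) * ((n * A) ^ (1/k) * Sr ^ (1/q)) + η := by linarith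
    _ = A ^ (1/k) * ((1/n) * Sr) ^ (1/q) + η := by rw [alg]

theorem stmt17 (k kstar : ℝ) (hk : 1 < k) (hkstar : kstar = k / (k - 1))
    (n : ℕ) (hn : 0 < n) (ρ : ℝ) (hρ : 0 < ρ) (ℓ : Fin n → ℝ) :
    sSup ((fun p : Fin n → ℝ => ∑ i, p i * ℓ i) ''
        {p | (∀ i, 0 ≤ p i) ∧ ∑ i, p i = 1 ∧
          ∑ i, (((n : ℝ) * p i) ^ k - k * ((n : ℝ) * p i) + k - 1) / (2 * k * (k - 1)) ≤ ρ}) =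
      ⨅ η : ℝ, (1 + 2 * k * (k - 1) * ρ / n) ^ (1 / k) *
          ((1 / n) * ∑ i, (max (ℓ i - η) 0) ^ kstar) ^ (1 / kstar) + η := by
  classical
  have hn' : (0:ℝ) < n := by exact_mod_cast hn
  have hk1 : (0:ℝ) < k - 1 := by linarith
  have hk0 : (0:ℝ) < k := by linarith
  have hconj : Real.HolderConjugate k kstar :=
    (Real.holderConjugate_iff_eq_conjExponent hk).2 hkstar
  have hq1 : 1 < kstar := hconj.symm.lt
  have hq0 : 0 < kstar := by linarith
  have hqk : (kstar - 1) * k = kstar := by rw [hkstar]; field_simp; ring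
  have hinv : 1/k + 1/kstar = 1 := by
    have := hconj.inv_add_inv_eq_one
    rw [inv_eq_one_div, inv_eq_one_div] at this; exact this
  set A := 1 + 2 * k * (k - 1) * ρ / (n:ℝ) with hAdef
  have hA1 : 1 < A := by
    have : 0 < 2 * k * (k - 1) * ρ / (n:ℝ) := by positivity
    rw [hAdef]; linarith
  have hA0 : (0:ℝ) < A := by linarith
  set g : ℝ → ℝ := fun η => A ^ (1/k) *
      ((1/(n:ℝ)) * ∑ i, (max (ℓ i - η) 0) ^ kstar) ^ (1/kstar) + η with hgdef
  set D : Set (Fin n → ℝ) := {p | (∀ i, 0 ≤ p i) ∧ ∑ i, p i = 1 ∧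
      ∑ i, (((n : ℝ) * p i) ^ k - k * ((n : ℝ) * p i) + k - 1) / (2 * k * (k - 1)) ≤ ρ} with hDdef
  have UB : ∀ p ∈ D, ∀ η, ∑ i, p i * ℓ i ≤ g η := by
    intro p hp η
    exact holder_bound k kstar hconj n hn ρ hρ.le ℓ p hp.1 hp.2.1 hp.2.2 η
  -- uniform distribution is feasible
  have hunif : (fun _ : Fin n => 1/(n:ℝ)) ∈ D := by
    refine ⟨fun i => by positivity, ?_, ?_⟩
    · rw [Finset.sum_const, Finset.card_univ, Fintype.card_fin, nsmul_eq_mul]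
      field_simp
    · have e : ∀ i : Fin n, (((n : ℝ) * (1/(n:ℝ))) ^ k - k * ((n : ℝ) * (1/(n:ℝ))) + k - 1)
          / (2 * k * (k - 1)) = 0 := by
        intro i
        rw [mul_one_div, div_self hn'.ne', Real.one_rpow]
        ring_nf
      rw [Finset.sum_congr rfl fun i _ => e i, Finset.sum_const]
      simp [hρ.le]
  have hC : (0:ℝ) < 2 * k * (k - 1) := by nlinarith
  have constraint_of : ∀ p : Fin n → ℝ, (∑ i, p i = 1) →
      (∑ i, ((n:ℝ) * p i) ^ k ≤ n * A) →
      ∑ i, (((n : ℝ) * p i) ^ k - k * ((n : ℝ) * p i) + k - 1) / (2 * k * (k - 1)) ≤ ρ := by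
    intro p hp1 hpk
    have hsum_np : ∑ i, (n:ℝ) * p i = (n:ℝ) := by rw [← Finset.mul_sum, hp1, mul_one]
    rw [← Finset.sum_div, div_le_iff₀ hC]
    have h2 : ∑ i, (((n : ℝ) * p i) ^ k - k * ((n : ℝ) * p i) + k - 1)
        = (∑ i, ((n : ℝ) * p i) ^ k) - k * n + (k-1) * n := by
      simp only [Finset.sum_sub_distrib, Finset.sum_add_distrib, ← Finset.mul_sum, hsum_np,
        Finset.sum_const, Finset.card_univ, Fintype.card_fin, nsmul_eq_mul]
      ring
    have hnA : (n:ℝ) * A = n + 2*k*(k-1)*ρ := by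
      rw [hAdef, mul_add, mul_one, mul_div_assoc', mul_div_cancel_left₀ _ hn'.ne']
    rw [h2]
    nlinarith
  have hne : ((fun p : Fin n → ℝ => ∑ i, p i * ℓ i) '' D).Nonempty :=
    ⟨_, ⟨_, hunif, rfl⟩⟩
  have hbddA : BddAbove ((fun p : Fin n → ℝ => ∑ i, p i * ℓ i) '' D) := by
    refine ⟨g 0, ?_⟩
    rintro b ⟨p, hp, rfl⟩
    exact UB p hp 0
  have hbddB : BddBelow (Set.range g) := by
    refine ⟨∑ i, (1/(n:ℝ)) * ℓ i, ?_⟩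
    rintro b ⟨η, rfl⟩
    exact UB _ hunif η
  apply le_antisymm
  · apply csSup_le hne
    rintro b ⟨p, hp, rfl⟩
    exact le_ciInf (UB p hp)
  · suffices h : ∃ p ∈ D, ∃ η, g η ≤ ∑ i, p i * ℓ i by
      obtain ⟨p, hpD, η, hge⟩ := h
      calc ⨅ η, g η ≤ g η := ciInf_le hbddB η
        _ ≤ ∑ i, p i * ℓ i := hge
        _ ≤ sSup ((fun p : Fin n → ℝ => ∑ i, p i * ℓ i) '' D) :=
            le_csSup hbddA ⟨p, hpD, rfl⟩
    obtain ⟨j, -, hj⟩ := Finset.exists_max_image Finset.univ ℓ ⟨⟨0, hn⟩, Finset.mem_univ _⟩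
    replace hj : ∀ i, ℓ i ≤ ℓ j := fun i => hj i (Finset.mem_univ i)
    set m := ℓ j with hm
    set F := Finset.univ.filter (fun i => ℓ i = m) with hF
    set r := F.card with hr
    have hjF : j ∈ F := Finset.mem_filter.2 ⟨Finset.mem_univ _, rfl⟩
    have hr0 : 0 < r := Finset.card_pos.2 ⟨j, hjF⟩
    have hr' : (0:ℝ) < r := by exact_mod_cast hr0
    have hrn : r ≤ n := by
      have := Finset.card_le_card (Finset.filter_subset (fun i => ℓ i = m) Finset.univ)
      simpa using this
    have hgm : g m = m := by
      simp only [hgdef]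
      rw [Finset.sum_eq_zero (fun i _ => by
        rw [max_eq_right (by have := hj i; linarith), Real.zero_rpow hq0.ne'])]
      rw [mul_zero, Real.zero_rpow (one_div_ne_zero hq0.ne'), mul_zero, zero_add]
    have hsum_if : ∀ c : ℝ, ∑ i, (if ℓ i = m then c else 0) = r * c := by
      intro c
      rw [Finset.sum_ite, Finset.sum_const, Finset.sum_const_zero, add_zero, nsmul_eq_mul]
    by_cases hcase : ((n:ℝ)/(r:ℝ)) ^ (k-1) ≤ A
    · -- uniform on maximizers
      set p : Fin n → ℝ := fun i => if ℓ i = m then 1/(r:ℝ) else 0 with hpdef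
      have hp0 : ∀ i, 0 ≤ p i := fun i => by
        simp only [hpdef]; split_ifs <;> positivity
      have hp1 : ∑ i, p i = 1 := by
        simp only [hpdef]; rw [hsum_if]; field_simp
      have hval : ∑ i, p i * ℓ i = m := by
        have e : ∀ i, p i * ℓ i = (if ℓ i = m then (1/(r:ℝ)) * m else 0) := by
          intro i
          simp only [hpdef]
          split_ifs with h
          · rw [h]
          · rw [zero_mul]
        rw [Finset.sum_congr rfl (fun i _ => e i), hsum_if]
        field_simp
      have hpk : ∑ i, ((n:ℝ) * p i) ^ k ≤ n * A := by
        have e : ∀ i, ((n:ℝ) * p i) ^ k = (if ℓ i = m then ((n:ℝ)/r)^k else 0) := by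
          intro i
          simp only [hpdef]
          split_ifs with h
          · rw [mul_one_div]
          · rw [mul_zero, Real.zero_rpow hk0.ne']
        rw [Finset.sum_congr rfl (fun i _ => e i), hsum_if]
        have e2 : (r:ℝ) * ((n:ℝ)/r)^k = n * ((n:ℝ)/r)^(k-1) := by
          have hx : (0:ℝ) < (n:ℝ)/r := div_pos hn' hr'
          have h3 : ((n:ℝ)/r)^k = ((n:ℝ)/r)^(k-1) * ((n:ℝ)/r) := by
            rw [← Real.rpow_add_one hx.ne' (k-1)]
            norm_num
          rw [h3]
          field_simp
        rw [e2]
        exact mul_le_mul_of_nonneg_left hcase hn'.le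
      exact ⟨p, ⟨hp0, hp1, constraint_of p hp1 hpk⟩, m, by rw [hgm, hval]⟩
    · push_neg at hcase
      -- interior critical point via IVT
      have hrltn : r < n := by
        rcases lt_or_eq_of_le hrn with h | h
        · exact h
        · exfalso
          rw [h, div_self hn'.ne', Real.one_rpow] at hcase
          linarith
      set G := Finset.univ.filter (fun i => ¬ ℓ i = m) with hG
      have hcards : r + G.card = n := by
        have := Finset.card_filter_add_card_filter_not
          (s := Finset.univ) (p := fun i : Fin n => ℓ i = m)
        simpa [← hF, ← hG] using this
      have hGne : G.Nonempty := by
        rw [← Finset.card_pos]; omega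
      obtain ⟨j', hj'G, hj'max⟩ := Finset.exists_max_image G ℓ hGne
      set m' := ℓ j' with hm'
      have hm'm : m' < m :=
        lt_of_le_of_ne (hj j') (by simpa [hG] using (Finset.mem_filter.1 hj'G).2)
      obtain ⟨i0, -, hi0⟩ := Finset.exists_min_image Finset.univ ℓ ⟨j, Finset.mem_univ _⟩
      replace hi0 : ∀ i, ℓ i0 ≤ ℓ i := fun i => hi0 i (Finset.mem_univ i)
      set mn := ℓ i0 with hmn
      set Dg := m - mn with hDg
      have hmnm' : mn ≤ m' := hi0 j'
      have hD0 : 0 < Dg := by rw [hDg]; linarith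
      set B := A ^ (1/kstar) with hB
      have hB1 : 1 < B := by
        rw [hB, Real.one_lt_rpow_iff_of_pos hA0]
        left
        exact ⟨hA1, by positivity⟩
      set y := Dg/(B-1) + 1 with hy
      have hy0 : 0 < y := by
        rw [hy]
        have : 0 < Dg/(B-1) := div_pos hD0 (by linarith)
        linarith
      set η₀ := m - Dg - y with hη₀
      set η₁ := (m' + m)/2 with hη₁
      have hη₁m : η₁ < m := by rw [hη₁]; linarith
      have hm'η₁ : m' < η₁ := by rw [hη₁]; linarith
      have hη₀η₁ : η₀ < η₁ := by rw [hη₀, hDg]; linarith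
      set Sf : ℝ → ℝ := fun η => ∑ i, max (ℓ i - η) 0 ^ kstar with hSf
      set Tf : ℝ → ℝ := fun η => ∑ i, max (ℓ i - η) 0 ^ (kstar - 1) with hTf
      have hq10 : (0:ℝ) ≤ kstar - 1 := by linarith
      have hTpos : ∀ η, η < m → 0 < Tf η := by
        intro η hη
        have h1 : (0:ℝ) < max (m - η) 0 ^ (kstar - 1) := by
          rw [max_eq_left (by linarith)]
          exact Real.rpow_pos_of_pos (by linarith) _
        have h2 := Finset.single_le_sum (f := fun i => max (ℓ i - η) 0 ^ (kstar-1))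
          (fun i _ => Real.rpow_nonneg (le_max_right _ _) _) (Finset.mem_univ j)
        exact lt_of_lt_of_le h1 h2
      have hSpos : ∀ η, η < m → 0 < Sf η := by
        intro η hη
        have h1 : (0:ℝ) < max (m - η) 0 ^ kstar := by
          rw [max_eq_left (by linarith)]
          exact Real.rpow_pos_of_pos (by linarith) _
        have h2 := Finset.single_le_sum (f := fun i => max (ℓ i - η) 0 ^ kstar)
          (fun i _ => Real.rpow_nonneg (le_max_right _ _) _) (Finset.mem_univ j)
        exact lt_of_lt_of_le h1 h2
      set hfun : ℝ → ℝ := fun η => (n:ℝ)^(k-1) * Sf η / (Tf η)^k with hhf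
      have hcont : ContinuousOn hfun (Set.Icc η₀ η₁) := by
        apply ContinuousOn.div
        · exact (continuous_const.mul (cont_sum_maxpow kstar hq0.le ℓ)).continuousOn
        · exact ((cont_sum_maxpow (kstar - 1) hq10 ℓ).continuousOn).rpow_const
            (fun x hx => Or.inl (hTpos x (lt_of_le_of_lt hx.2 hη₁m)).ne')
        · intro x hx
          exact (Real.rpow_pos_of_pos (hTpos x (lt_of_le_of_lt hx.2 hη₁m)) k).ne'
      have hx1 : 0 < m - η₁ := by linarith
      have hsplit : ∀ e : ℝ, 0 < e → ∑ i, max (ℓ i - η₁) 0 ^ e = r * (m - η₁) ^ e := by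
        intro e he
        rw [← Finset.sum_filter_add_sum_filter_not Finset.univ (fun i => ℓ i = m)]
        have e1 : ∑ i ∈ Finset.univ.filter (fun i => ℓ i = m), max (ℓ i - η₁) 0 ^ e
            = r * (m - η₁)^e := by
          rw [Finset.sum_congr rfl (g := fun i => (m - η₁)^e) (fun i hi => by
            rw [(Finset.mem_filter.1 hi).2, max_eq_left (by linarith)])]
          rw [Finset.sum_const, nsmul_eq_mul, ← hF, ← hr]
        have e2 : ∑ i ∈ Finset.univ.filter (fun i => ¬ ℓ i = m), max (ℓ i - η₁) 0 ^ e = 0 := by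
          apply Finset.sum_eq_zero
          intro i hi
          have h3 : ℓ i ≤ m' := hj'max i (by rwa [hG])
          rw [max_eq_right (by linarith), Real.zero_rpow he.ne']
        rw [e1, e2, add_zero]
      have hval1 : hfun η₁ = ((n:ℝ)/r)^(k-1) := by
        have hSr : Sf η₁ = r * (m - η₁) ^ kstar := hsplit kstar hq0
        have hTr : Tf η₁ = r * (m - η₁) ^ (kstar - 1) := hsplit (kstar - 1) (by linarith)
        rw [hhf]
        simp only
        rw [hSr, hTr]
        rw [Real.mul_rpow hr'.le (Real.rpow_nonneg hx1.le _), ← Real.rpow_mul hx1.le, hqk]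
        have hrk : (r:ℝ)^k = (r:ℝ)^(k-1) * r := by
          rw [← Real.rpow_add_one hr'.ne' (k-1)]
          norm_num
        rw [hrk, Real.div_rpow hn'.le hr'.le]
        have hXne : (m - η₁) ^ kstar ≠ 0 := (Real.rpow_pos_of_pos hx1 _).ne'
        have hrkne : (r:ℝ)^(k-1) ≠ 0 := (Real.rpow_pos_of_pos hr' _).ne'
        field_simp
      have hmax0 : ∀ i, max (ℓ i - η₀) 0 = ℓ i - η₀ := by
        intro i
        have h4 : mn ≤ ℓ i := hi0 i
        apply max_eq_left
        rw [hη₀]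
        rw [hDg]
        linarith
      have hyb : ∀ i, y ≤ ℓ i - η₀ := by
        intro i
        have h4 : mn ≤ ℓ i := hi0 i
        rw [hη₀, hDg]
        linarith
      have hxb : ∀ i, ℓ i - η₀ ≤ Dg + y := by
        intro i
        have h4 : ℓ i ≤ m := hj i
        rw [hη₀]
        linarith
      have hDy0 : 0 < Dg + y := by linarith
      have hval0 : hfun η₀ < A := by
        have hSb : Sf η₀ ≤ n * (Dg + y)^kstar := by
          calc Sf η₀ ≤ ∑ _i : Fin n, (Dg + y)^kstar := by
                apply Finset.sum_le_sum
                intro i _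
                rw [hmax0 i]
                exact Real.rpow_le_rpow (by linarith [hyb i]) (hxb i) hq0.le
            _ = n * (Dg + y)^kstar := by
                rw [Finset.sum_const, Finset.card_univ, Fintype.card_fin, nsmul_eq_mul]
        have hTb : (n:ℝ) * y^(kstar - 1) ≤ Tf η₀ := by
          calc (n:ℝ) * y^(kstar-1) = ∑ _i : Fin n, y^(kstar-1) := by
                rw [Finset.sum_const, Finset.card_univ, Fintype.card_fin, nsmul_eq_mul]
            _ ≤ Tf η₀ := by
                apply Finset.sum_le_sum
                intro i _
                rw [hmax0 i]
                exact Real.rpow_le_rpow hy0.le (hyb i) hq10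
        have hTbpos : (0:ℝ) < n * y^(kstar-1) :=
          mul_pos hn' (Real.rpow_pos_of_pos hy0 _)
        have hratio : (Dg + y)/y < B := by
          rw [div_lt_iff₀ hy0]
          have hyB : y*(B-1) = Dg + (B-1) := by
            have hB1' : B - 1 ≠ 0 := by linarith
            rw [hy]
            field_simp
          nlinarith
        calc hfun η₀ = (n:ℝ)^(k-1) * Sf η₀ / (Tf η₀)^k := rfl
          _ ≤ (n:ℝ)^(k-1) * ((n:ℝ) * (Dg+y)^kstar) / ((n:ℝ) * y^(kstar-1))^k := by
              apply div_le_div₀ (by positivity)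
                (mul_le_mul_of_nonneg_left hSb (Real.rpow_nonneg hn'.le _))
                (Real.rpow_pos_of_pos hTbpos k)
                (Real.rpow_le_rpow hTbpos.le hTb hk0.le)
          _ = ((Dg+y)/y)^kstar := by
              rw [Real.mul_rpow hn'.le (Real.rpow_nonneg hy0.le _), ← Real.rpow_mul hy0.le, hqk]
              have hnk : (n:ℝ)^(k-1) * ((n:ℝ) * (Dg+y)^kstar) = (n:ℝ)^k * (Dg+y)^kstar := by
                have h5 : (n:ℝ)^k = (n:ℝ)^(k-1) * n := by
                  rw [← Real.rpow_add_one hn'.ne' (k-1)]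
                  norm_num
                rw [h5]
                ring
              rw [hnk, mul_div_mul_left _ _ (Real.rpow_pos_of_pos hn' k).ne']
              rw [Real.div_rpow hDy0.le hy0.le]
          _ < B^kstar := Real.rpow_lt_rpow (by positivity) hratio hq0
          _ = A := by
              rw [hB, ← Real.rpow_mul hA0.le, one_div, inv_mul_cancel₀ hq0.ne', Real.rpow_one]
      have hmem : A ∈ Set.Icc (hfun η₀) (hfun η₁) := by
        constructor
        · exact hval0.le
        · rw [hval1]
          exact hcase.le
      obtain ⟨ηs, hηsIcc, hηsval⟩ := intermediate_value_Icc hη₀η₁.le hcont hmem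
      have hηsm : ηs < m := lt_of_le_of_lt hηsIcc.2 hη₁m
      set Tp := Tf ηs with hTpdef
      have hTp0 : 0 < Tp := hTpos ηs hηsm
      set Sp := Sf ηs with hSpdef
      have hSp0 : 0 < Sp := hSpos ηs hηsm
      have hAval : (n:ℝ)^(k-1) * Sp / Tp^k = A := hηsval
      set p : Fin n → ℝ := fun i => max (ℓ i - ηs) 0 ^ (kstar - 1) / Tp with hpdef
      have hp0 : ∀ i, 0 ≤ p i := fun i =>
        div_nonneg (Real.rpow_nonneg (le_max_right _ _) _) hTp0.le
      have hp1 : ∑ i, p i = 1 := by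
        simp only [hpdef]
        rw [← Finset.sum_div]
        exact div_self hTp0.ne'
      have hnk5 : (n:ℝ)^k = (n:ℝ)^(k-1) * n := by
        rw [← Real.rpow_add_one hn'.ne' (k-1)]
        norm_num
      have hnpk : ∑ i, ((n:ℝ) * p i)^k = n * A := by
        have e : ∀ i, ((n:ℝ) * p i)^k = (n:ℝ)^k * max (ℓ i - ηs) 0 ^ kstar / Tp^k := by
          intro i
          simp only [hpdef]
          rw [show (n:ℝ) * (max (ℓ i - ηs) 0 ^ (kstar-1)/Tp)
              = ((n:ℝ) * max (ℓ i - ηs) 0 ^ (kstar-1))/Tp by ring]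
          rw [Real.div_rpow (mul_nonneg hn'.le (Real.rpow_nonneg (le_max_right _ _) _)) hTp0.le]
          rw [Real.mul_rpow hn'.le (Real.rpow_nonneg (le_max_right _ _) _)]
          rw [← Real.rpow_mul (le_max_right _ _), hqk]
        rw [Finset.sum_congr rfl (fun i _ => e i)]
        rw [← Finset.sum_div, ← Finset.mul_sum]
        rw [← hAval, hnk5]
        have hTpk : (0:ℝ) < Tp^k := Real.rpow_pos_of_pos hTp0 k
        field_simp
        ring
      have hvalp : ∑ i, p i * ℓ i = Sp/Tp + ηs := by
        have e : ∀ i, p i * ℓ i = max (ℓ i - ηs) 0 ^ kstar / Tp + p i * ηs := by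
          intro i
          simp only [hpdef]
          have hmr := max_rpow_pred_mul kstar (ℓ i - ηs) hq1
          field_simp
          linear_combination hmr
        rw [Finset.sum_congr rfl (fun i _ => e i), Finset.sum_add_distrib, ← Finset.sum_div]
        rw [← Finset.sum_mul, hp1, one_mul]
      have hgeq : g ηs = Sp/Tp + ηs := by
        simp only [hgdef]
        have hL1 : (0:ℝ) < A^(1/k) := Real.rpow_pos_of_pos hA0 _
        have hL2 : (0:ℝ) < (1/(n:ℝ)) * Sp := mul_pos (by positivity) hSp0
        have hL2' : (0:ℝ) < ((1/(n:ℝ)) * Sp)^(1/kstar) := Real.rpow_pos_of_pos hL2 _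
        have hL : (0:ℝ) < A^(1/k) * ((1/(n:ℝ)) * Sp)^(1/kstar) := mul_pos hL1 hL2'
        have hR : (0:ℝ) < Sp/Tp := div_pos hSp0 hTp0
        have key : A^(1/k) * ((1/(n:ℝ)) * Sp)^(1/kstar) = Sp/Tp := by
          rw [← Real.exp_log hL, ← Real.exp_log hR]
          congr 1
          have hlogA : Real.log A = (k-1)*Real.log n + Real.log Sp - k * Real.log Tp := by
            rw [← hAval]
            rw [Real.log_div (mul_pos (Real.rpow_pos_of_pos hn' _) hSp0).ne'
              (Real.rpow_pos_of_pos hTp0 k).ne']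
            rw [Real.log_mul (Real.rpow_pos_of_pos hn' _).ne' hSp0.ne']
            rw [Real.log_rpow hn', Real.log_rpow hTp0]
          have hlog1n : Real.log (1/(n:ℝ)) = -Real.log n := by
            rw [one_div, Real.log_inv]
          rw [Real.log_mul hL1.ne' hL2'.ne', Real.log_rpow hA0, Real.log_rpow hL2,
            Real.log_div hSp0.ne' hTp0.ne', Real.log_mul (by positivity : (1/(n:ℝ)) ≠ 0) hSp0.ne',
            hlog1n, hlogA]
          have huk : (1/k) * k = 1 := by field_simp
          have hv : 1/kstar = 1 - 1/k := by linarith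
          rw [hv]
          linear_combination (Real.log (n:ℝ) - Real.log Tp) * huk
        rw [key]
      exact ⟨p, ⟨hp0, hp1, constraint_of p hp1 (le_of_eq hnpk)⟩, ηs, by rw [hgeq, hvalp]⟩
end
end

section
/- Let n ∈ ℕ, ρ ≥ 0, and z ∈ ℝⁿ. Then sup { Σ_{i=1}^n p_i z_i : p ∈ ℝⁿ, p ≥ 0, Σ_i p_i = 1, Σ_{i=1}^n ½(n p_i − 1)² ≤ ρ } ≤ z̄ + √(2ρ s_n(z)² / n), where z̄ = (1/n)Σ z_i and s_n(z)² = (1/n)Σ (z_i − z̄)². -/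
open MeasureTheory ProbabilityTheory Filter Set

noncomputable section

theorem stmt18 (n : ℕ) (ρ : ℝ) (hρ : 0 ≤ ρ) (z : Fin n → ℝ) :
    sSup ((fun p : Fin n → ℝ => ∑ i, p i * z i) ''
        {p | (∀ i, 0 ≤ p i) ∧ ∑ i, p i = 1 ∧ ∑ i, ((n : ℝ) * p i - 1) ^ 2 / 2 ≤ ρ}) ≤
      sampleMean z + Real.sqrt (2 * ρ * sampleVar z / n) := by
  rcases Nat.eq_zero_or_pos n with hn | hn
  · subst hn
    have he : ((fun p : Fin 0 → ℝ => ∑ i, p i * z i) ''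
        {p | (∀ i, 0 ≤ p i) ∧ ∑ i, p i = 1 ∧ ∑ i, (((0:ℕ) : ℝ) * p i - 1) ^ 2 / 2 ≤ ρ}) = ∅ := by
      ext x; simp
    rw [he, Real.sSup_empty]
    have : sampleMean z = 0 := by simp [sampleMean]
    rw [this]
    positivity
  · have hm : (0:ℝ) < n := by exact_mod_cast hn
    set m : ℝ := (n : ℝ)
    have hzsum : ∑ i, z i = m * sampleMean z := by
      unfold sampleMean; field_simp; rfl
    have hwsum : ∑ i, (z i - sampleMean z)^2 = m * sampleVar z := by
      unfold sampleVar; field_simp; rfl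
    have hvar : 0 ≤ sampleVar z := by
      unfold sampleVar; positivity
    have hne : ((fun p : Fin n → ℝ => ∑ i, p i * z i) ''
        {p | (∀ i, 0 ≤ p i) ∧ ∑ i, p i = 1 ∧ ∑ i, ((n : ℝ) * p i - 1) ^ 2 / 2 ≤ ρ}).Nonempty := by
      refine ⟨∑ i, (1/m) * z i, ⟨fun _ => 1/m, ⟨fun i => by positivity, ?_, ?_⟩, rfl⟩⟩
      · rw [Finset.sum_const, Finset.card_univ, Fintype.card_fin, nsmul_eq_mul]
        field_simp; rfl
      · have : ∀ i : Fin n, (m * (1/m) - 1)^2 / 2 = 0 := by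
          intro i; field_simp; norm_num
        rw [Finset.sum_congr rfl (fun i _ => this i)]
        simpa using hρ
    apply csSup_le hne
    rintro x ⟨p, ⟨hp0, hp1, hpρ⟩, rfl⟩
    simp only
    have key1 : ∑ i, p i * z i - sampleMean z = ∑ i, (p i - 1/m) * (z i - sampleMean z) := by
      have e1 : ∀ i : Fin n, (p i - 1/m) * (z i - sampleMean z)
          = p i * z i - sampleMean z * p i - (1/m) * z i + (1/m) * sampleMean z := by
        intro i; ring
      rw [Finset.sum_congr rfl (fun i _ => e1 i)]
      simp only [Finset.sum_add_distrib, Finset.sum_sub_distrib, ← Finset.mul_sum,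
        Finset.sum_const, Finset.card_univ, Fintype.card_fin, nsmul_eq_mul]
      rw [hp1, hzsum]
      field_simp; rw [show (n:ℝ) = m from rfl]; ring
    have hqsum : ∑ i, (p i - 1/m)^2 ≤ 2 * ρ / m^2 := by
      have e2 : ∀ i : Fin n, (p i - 1/m)^2 = (m * p i - 1)^2 / m^2 := by
        intro i; field_simp
      rw [Finset.sum_congr rfl (fun i _ => e2 i), ← Finset.sum_div]
      rw [div_le_div_iff₀ (by positivity) (by positivity)]
      have h3 : ∑ i, (m * p i - 1)^2 ≤ 2 * ρ := by
        have h4 := hpρ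
        rw [← Finset.sum_div] at h4
        linarith
      nlinarith [sq_nonneg m]
    have cs : (∑ i, (p i - 1/m) * (z i - sampleMean z))^2
        ≤ (∑ i, (p i - 1/m)^2) * ∑ i, (z i - sampleMean z)^2 :=
      Finset.sum_mul_sq_le_sq_mul_sq _ _ _
    have hb : (∑ i, (p i - 1/m) * (z i - sampleMean z))^2 ≤ 2 * ρ * sampleVar z / m := by
      calc (∑ i, (p i - 1/m) * (z i - sampleMean z))^2
          ≤ (∑ i, (p i - 1/m)^2) * ∑ i, (z i - sampleMean z)^2 := cs
        _ ≤ (2 * ρ / m^2) * (m * sampleVar z) := by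
            apply mul_le_mul hqsum (le_of_eq hwsum) (by positivity) (by positivity)
        _ = 2 * ρ * sampleVar z / m := by field_simp
    have hfin : ∑ i, (p i - 1/m) * (z i - sampleMean z) ≤ Real.sqrt (2 * ρ * sampleVar z / m) := by
      calc ∑ i, (p i - 1/m) * (z i - sampleMean z)
          ≤ |∑ i, (p i - 1/m) * (z i - sampleMean z)| := le_abs_self _
        _ = Real.sqrt ((∑ i, (p i - 1/m) * (z i - sampleMean z))^2) := (Real.sqrt_sq_eq_abs _).symm
        _ ≤ Real.sqrt (2 * ρ * sampleVar z / m) := Real.sqrt_le_sqrt hb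
    linarith [key1 ▸ hfin]
end
end
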